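/- Weighted partition of unity for hierarchical B-splines: under the hypotheses Ω⁰ ∈ A²_{m−1,n−1} with respect to G⁰, Ω^ℓ ∈ Ã²_{m,n} with respect to G^{ℓ−1} for ℓ = 1,…,N−1, and ∂Ω⁰ ∩ ∂Ω¹ = ∅, there exist strictly positive weights w_τ > 0 for τ in the hierarchical B-spline family K(H) such that Σ_{τ ∈ K(H)} w_τ · τ|_{Ω⁰} = 1 on Ω⁰. -/

import Mathlib

open Set

noncomputable section

/-- Cells of the planar integer grid, indexed by their lower-left corner. -/
def cellZ (p : ℤ × ℤ) : Set (ℝ × ℝ) :=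
  Set.Icc (p.1 : ℝ) (p.1 + 1) ×ˢ Set.Icc (p.2 : ℝ) (p.2 + 1)

/-- The planar domain formed by the cells with indices in `S`. -/
def cellU (S : Finset (ℤ × ℤ)) : Set (ℝ × ℝ) := ⋃ p ∈ S, cellZ p

/-- The domain is a topological 2-manifold with boundary: no two cells meet only
at a corner (the inadmissible vertex configurations are excluded). -/
def ManifoldLike (S : Finset (ℤ × ℤ)) : Prop :=
  ∀ i j : ℤ,
    ¬(((i - 1, j - 1) ∈ S ∧ (i, j) ∈ S ∧ (i - 1, j) ∉ S ∧ (i, j - 1) ∉ S) ∨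
      ((i - 1, j) ∈ S ∧ (i, j - 1) ∈ S ∧ (i - 1, j - 1) ∉ S ∧ (i, j) ∉ S))

/-- The 1D admissibility class `A¹_k` for a set of cell indices: the number of cells
strictly between two neighboring connected components exceeds `k`. -/
def Adm1 (k : ℤ) (A : Set ℤ) : Prop :=
  ∀ a b : ℤ, a ∈ A → b ∈ A → a < b → (∀ c : ℤ, a < c → c < b → c ∉ A) →
    b = a + 1 ∨ k < b - a - 1

/-- Horizontal slice (row) of a planar cell domain. -/
def row (S : Finset (ℤ × ℤ)) (j : ℤ) : Set ℤ := {i | (i, j) ∈ S}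

/-- Vertical slice (column) of a planar cell domain. -/
def col (S : Finset (ℤ × ℤ)) (i : ℤ) : Set ℤ := {j | (i, j) ∈ S}

/-- Horizontal dilatation (combinatorially, on cell indices of the half-shifted grid). -/
def hdil (S : Finset (ℤ × ℤ)) : Finset (ℤ × ℤ) :=
  S ∪ S.image (fun p => (p.1 + 1, p.2))

/-- Vertical dilatation. -/
def vdil (S : Finset (ℤ × ℤ)) : Finset (ℤ × ℤ) :=
  S ∪ S.image (fun p => (p.1, p.2 + 1))

/-- The dilatation `Ω^e_{k₁,k₂}` (cell indices w.r.t. the suitably half-shifted grid). -/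
def dil (S : Finset (ℤ × ℤ)) (k₁ k₂ : ℕ) : Finset (ℤ × ℤ) :=
  hdil^[k₁] (vdil^[k₂] S)

/-- `Ω` admits a horizontal offset at distance 1/2: all rows `H(Ω)` and the consecutive
unions `σH(Ω)` are in `A¹₁`. -/
def rowAdmissible (S : Finset (ℤ × ℤ)) : Prop :=
  ∀ j : ℤ, Adm1 1 (row S j) ∧ Adm1 1 (row S j ∪ row S (j + 1))

/-- `Ω` admits a vertical offset at distance 1/2. -/
def colAdmissible (S : Finset (ℤ × ℤ)) : Prop :=
  ∀ i : ℤ, Adm1 1 (col S i) ∧ Adm1 1 (col S i ∪ col S (i + 1))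

/-- The class `A²_{1,0}`. -/
def A210 (S : Finset (ℤ × ℤ)) : Prop := ManifoldLike S ∧ rowAdmissible S

/-- The class `A²_{0,1}`. -/
def A201 (S : Finset (ℤ × ℤ)) : Prop := ManifoldLike S ∧ colAdmissible S

/-- The admissibility classes `A²_{k₁,k₂}`, defined inductively. -/
def A2 : ℕ → ℕ → Finset (ℤ × ℤ) → Prop
  | 0, 0, S => ManifoldLike S
  | k₁ + 1, k₂, S => A2 k₁ k₂ S ∧ A210 (dil S k₁ k₂)
  | 0, k₂ + 1, S => A2 0 k₂ S ∧ A201 (dil S 0 k₂)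

/-- Horizontal inner edges (indexed by their left endpoint `(i,j)`: the edge from
`(i,j)` to `(i+1,j)`, inner iff the cells above and below are both present). -/
def innerH (S : Finset (ℤ × ℤ)) : Set (ℤ × ℤ) :=
  {p | (p.1, p.2) ∈ S ∧ (p.1, p.2 - 1) ∈ S}

/-- Vertical inner edges. -/
def innerV (S : Finset (ℤ × ℤ)) : Set (ℤ × ℤ) :=
  {p | (p.1, p.2) ∈ S ∧ (p.1 - 1, p.2) ∈ S}

/-- Horizontal edges of the domain. -/
def edgesH (S : Finset (ℤ × ℤ)) : Set (ℤ × ℤ) :=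
  {p | (p.1, p.2) ∈ S ∨ (p.1, p.2 - 1) ∈ S}

/-- Vertical edges of the domain. -/
def edgesV (S : Finset (ℤ × ℤ)) : Set (ℤ × ℤ) :=
  {p | (p.1, p.2) ∈ S ∨ (p.1 - 1, p.2) ∈ S}

/-- Vertices of the domain. -/
def verts (S : Finset (ℤ × ℤ)) : Set (ℤ × ℤ) :=
  {p | (p.1, p.2) ∈ S ∨ (p.1 - 1, p.2) ∈ S ∨ (p.1, p.2 - 1) ∈ S ∨ (p.1 - 1, p.2 - 1) ∈ S}

/-- Inner vertices of the domain. -/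
def innerVert (S : Finset (ℤ × ℤ)) : Set (ℤ × ℤ) :=
  {p | (p.1, p.2) ∈ S ∧ (p.1 - 1, p.2) ∈ S ∧ (p.1, p.2 - 1) ∈ S ∧ (p.1 - 1, p.2 - 1) ∈ S}

/-- Mixed smoothness `C^{m−1,n−1}`: the function is `C^{m−1}` in `x` along every
horizontal slice of the domain and `C^{n−1}` in `y` along every vertical slice. -/
def SmoothMixed (m n : ℕ) (g : ℝ → ℝ → ℝ) (Ω : Set (ℝ × ℝ)) : Prop :=
  (∀ y : ℝ, ContDiffOn ℝ (↑(m - 1) : ℕ∞) (fun x => g x y) {x | (x, y) ∈ Ω}) ∧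
  (∀ x : ℝ, ContDiffOn ℝ (↑(n - 1) : ℕ∞) (fun y => g x y) {y | (x, y) ∈ Ω})

/-- `g` coincides on the set `C` with a polynomial of bidegree at most `(m, n)`. -/
def PolyOn (m n : ℕ) (g : ℝ → ℝ → ℝ) (C : Set (ℝ × ℝ)) : Prop :=
  ∃ q : MvPolynomial (Fin 2) ℝ, MvPolynomial.degreeOf 0 q ≤ m ∧
    MvPolynomial.degreeOf 1 q ≤ n ∧
    ∀ z ∈ C, g z.1 z.2 = MvPolynomial.eval ![z.1, z.2] q

/-- A cell of the level-`ℓ` dyadic grid `Gℓ`, indexed by its lower-left corner. -/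
def cellL (ℓ : ℕ) (p : ℤ × ℤ) : Set (ℝ × ℝ) :=
  Set.Icc ((p.1 : ℝ) / 2 ^ ℓ) ((p.1 + 1) / 2 ^ ℓ) ×ˢ
    Set.Icc ((p.2 : ℝ) / 2 ^ ℓ) ((p.2 + 1) / 2 ^ ℓ)

/-- The domain formed by the level-`ℓ` cells with indices in `S`. -/
def cellUL (ℓ : ℕ) (S : Finset (ℤ × ℤ)) : Set (ℝ × ℝ) := ⋃ p ∈ S, cellL ℓ p

/-- The cardinal B-spline of degree `m` with support `[0, m+1]` and integer knots. -/
def cardinalB (m : ℕ) (x : ℝ) : ℝ :=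
  (∑ i ∈ Finset.range (m + 2),
    (-1 : ℝ) ^ i * ((m + 1).choose i) * (max (x - i) 0) ^ m) / (m.factorial)

/-- The level-`ℓ` tensor-product B-spline of bidegree `(m,n)` indexed by `q`. -/
def Bs (m n ℓ : ℕ) (q : ℤ × ℤ) (z : ℝ × ℝ) : ℝ :=
  cardinalB m (2 ^ ℓ * z.1 - q.1) * cardinalB n (2 ^ ℓ * z.2 - q.2)

/-- The support of the level-`ℓ` tensor-product B-spline indexed by `q`. -/
def suppL (m n ℓ : ℕ) (q : ℤ × ℤ) : Set (ℝ × ℝ) :=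
  Set.Icc ((q.1 : ℝ) / 2 ^ ℓ) ((q.1 + m + 1) / 2 ^ ℓ) ×ˢ
    Set.Icc ((q.2 : ℝ) / 2 ^ ℓ) ((q.2 + n + 1) / 2 ^ ℓ)

/-- Kraft's selection: level-`ℓ` B-splines whose support does not meet `int R^{ℓ−1}`
but meets `int R^ℓ` (for `ℓ = 0`, `R^{−1} = ∅`). Here `RS ℓ` is the set of level-`ℓ`
cells of `R^ℓ = Ω⁰ \ Ω^{ℓ+1}`. -/
def Kset (m n : ℕ) (RS : ℕ → Finset (ℤ × ℤ)) : ℕ → Set (ℤ × ℤ)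
  | 0 => {q | (suppL m n 0 q ∩ interior (cellUL 0 (RS 0))).Nonempty}
  | ℓ + 1 => {q | suppL m n (ℓ + 1) q ∩ interior (cellUL ℓ (RS ℓ)) = ∅ ∧
      (suppL m n (ℓ + 1) q ∩ interior (cellUL (ℓ + 1) (RS (ℓ + 1)))).Nonempty}

/-- The index set of the hierarchical B-splines `K = ⋃_{ℓ<N} K^ℓ`. -/
def IndH (m n N : ℕ) (RS : ℕ → Finset (ℤ × ℤ)) : Set (ℕ × (ℤ × ℤ)) :=
  {x | x.1 < N ∧ x.2 ∈ Kset m n RS x.1}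

/-- The spline space `S_{m,n}(H)` over the hierarchical T-mesh: `C^{m−1,n−1}` functions
on `Ω⁰` that are polynomials of bidegree `(m,n)` on each cell of the hierarchical mesh
(the level-`ℓ` cells lying in `Ωℓ` whose interiors avoid `Ω^{ℓ+1}`). -/
def SplineSetH (m n N : ℕ) (S : ℕ → Finset (ℤ × ℤ)) : Set (↥(cellUL 0 (S 0)) → ℝ) :=
  {f | ∃ g : ℝ → ℝ → ℝ, SmoothMixed m n g (cellUL 0 (S 0)) ∧
    (∀ ℓ < N, ∀ p : ℤ × ℤ, cellL ℓ p ⊆ cellUL ℓ (S ℓ) →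
      interior (cellL ℓ p) ∩ cellUL (ℓ + 1) (S (ℓ + 1)) = ∅ → PolyOn m n g (cellL ℓ p)) ∧
    ∀ z : ↥(cellUL 0 (S 0)), f z = g z.1.1 z.1.2}

/-- The complement-admissibility class `Ã²_{k₁,k₂}`: the complement of the domain in a
sufficiently large surrounding rectangle (containing it in its interior) is in `A²_{k₁,k₂}`. -/
def Atilde (k₁ k₂ : ℕ) (S : Finset (ℤ × ℤ)) : Prop :=
  ∃ a₁ b₁ a₂ b₂ : ℤ,
    S ⊆ (Finset.Icc (a₁ + 1) (b₁ - 1)) ×ˢ (Finset.Icc (a₂ + 1) (b₂ - 1)) ∧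
    A2 k₁ k₂ (((Finset.Icc a₁ b₁) ×ˢ (Finset.Icc a₂ b₂)) \ S)

namespace HBproof

open Finset

/-- `Ssum M j = ∑ (-1)^i C(M,i) i^j`. -/
noncomputable def Ssum (M j : ℕ) : ℝ :=
  ∑ i ∈ range (M+1), (-1)^i * (M.choose i : ℝ) * (i : ℝ)^j

lemma Ssum_succ (M j : ℕ) (hj : 1 ≤ j) :
    Ssum (M+1) j = Ssum M j - ∑ k ∈ range (j+1), (j.choose k : ℝ) * Ssum M k := by
  have h1 : Ssum (M+1) j
      = ∑ i ∈ range (M+1), (-1)^(i+1) * ((M.choose i : ℝ) + (M.choose (i+1) : ℝ)) * ((i:ℝ)+1)^j := by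
    rw [Ssum, sum_range_succ' _ (M+1)]
    simp only [Nat.cast_zero, zero_pow (show j ≠ 0 by omega), mul_zero, add_zero]
    apply sum_congr rfl
    intro i _
    simp only [Nat.choose_succ_succ, Nat.cast_add]
    push_cast
    ring
  have h2 : ∑ i ∈ range (M+1), (-1:ℝ)^(i+1) * (M.choose (i+1) : ℝ) * ((i:ℝ)+1)^j
      = Ssum M j := by
    have : Ssum M j = ∑ i ∈ range (M+2), (-1:ℝ)^i * (M.choose i : ℝ) * (i:ℝ)^j := by
      rw [Ssum, sum_range_succ _ (M+1)]
      simp [Nat.choose_succ_self]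
    rw [this, sum_range_succ' _ (M+1)]
    simp only [Nat.cast_zero, zero_pow (show j ≠ 0 by omega), mul_zero, add_zero]
    apply sum_congr rfl
    intro i _
    push_cast
    ring
  have h3 : ∑ i ∈ range (M+1), (-1:ℝ)^(i+1) * (M.choose i : ℝ) * ((i:ℝ)+1)^j
      = - ∑ k ∈ range (j+1), (j.choose k : ℝ) * Ssum M k := by
    have expand : ∀ i : ℕ, ((i:ℝ)+1)^j = ∑ k ∈ range (j+1), (i:ℝ)^k * (j.choose k : ℝ) := by
      intro i
      have := add_pow (i:ℝ) 1 j
      simpa using this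
    calc ∑ i ∈ range (M+1), (-1:ℝ)^(i+1) * (M.choose i : ℝ) * ((i:ℝ)+1)^j
        = ∑ i ∈ range (M+1), ∑ k ∈ range (j+1),
            (-(1:ℝ)) * ((j.choose k : ℝ) * ((-1)^i * (M.choose i : ℝ) * (i:ℝ)^k)) := by
          apply sum_congr rfl
          intro i _
          rw [expand i, mul_sum]
          apply sum_congr rfl
          intro k _
          ring
      _ = - ∑ k ∈ range (j+1), (j.choose k : ℝ) * Ssum M k := by
          rw [sum_comm]
          rw [← sum_neg_distrib]
          apply sum_congr rfl
          intro k _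
          rw [Ssum, mul_sum, ← sum_neg_distrib]
          apply sum_congr rfl
          intro i _
          ring
  have hsplit : ∀ i : ℕ, (-1:ℝ)^(i+1) * ((M.choose i : ℝ) + (M.choose (i+1) : ℝ)) * ((i:ℝ)+1)^j
      = (-1)^(i+1) * (M.choose i : ℝ) * ((i:ℝ)+1)^j + (-1)^(i+1) * (M.choose (i+1) : ℝ) * ((i:ℝ)+1)^j := by
    intro i; ring
  rw [h1]
  simp only [hsplit]
  rw [sum_add_distrib, h2, h3]
  ring

lemma Ssum_zero_of_lt : ∀ M j : ℕ, j < M → Ssum M j = 0 := by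
  intro M
  induction M with
  | zero => intro j hj; omega
  | succ M ih =>
    intro j hj
    rcases Nat.eq_zero_or_pos j with hj0 | hjpos
    · subst hj0
      have hz : (∑ i ∈ range (M+2), (-1:ℤ)^i * (M+1).choose i) = 0 := by
        rw [Int.alternating_sum_range_choose]
        simp
      have : ((∑ i ∈ range (M+2), (-1:ℤ)^i * (M+1).choose i : ℤ) : ℝ) = 0 := by
        rw [hz]; simp
      rw [Ssum]
      push_cast at this
      simpa using this
    · rw [Ssum_succ M j hjpos]
      rcases Nat.lt_or_ge j M with hjM | hjM
      · rw [ih j hjM]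
        have : ∀ k ∈ range (j+1), (j.choose k : ℝ) * Ssum M k = 0 := by
          intro k hk
          rw [Finset.mem_range] at hk
          rw [ih k (by omega)]
          ring
        rw [sum_eq_zero this]
        ring
      · have hjeq : j = M := by omega
        subst hjeq
        rw [sum_range_succ]
        have : ∀ k ∈ range j, (j.choose k : ℝ) * Ssum j k = 0 := by
          intro k hk
          rw [Finset.mem_range] at hk
          rw [ih k hk]
          ring
        rw [sum_eq_zero this]
        simp

lemma Ssum_diag : ∀ M : ℕ, Ssum M M = (-1)^M * (M.factorial : ℝ) := by
  intro M
  induction M with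
  | zero => simp [Ssum]
  | succ M ih =>
    rw [Ssum_succ M (M+1) (by omega)]
    have hMM1 : Ssum M (M+1) - ∑ k ∈ range (M+2), ((M+1).choose k : ℝ) * Ssum M k
        = - ((M+1) : ℝ) * Ssum M M := by
      rw [sum_range_succ, sum_range_succ]
      have : ∀ k ∈ range M, (((M+1).choose k : ℝ)) * Ssum M k = 0 := by
        intro k hk
        rw [Finset.mem_range] at hk
        rw [Ssum_zero_of_lt M k hk]
        ring
      rw [sum_eq_zero this]
      simp [Nat.choose_succ_self_right]
      ring
    rw [hMM1, ih, Nat.factorial_succ]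
    push_cast
    ring

/-- key sum: `∑ (-1)^i C(M,i) (c-i)^d = 0` for `d < M`. -/
lemma keysum_lt (M d : ℕ) (h : d < M) (c : ℝ) :
    ∑ i ∈ range (M+1), (-1:ℝ)^i * (M.choose i : ℝ) * (c - i)^d = 0 := by
  have expand : ∀ i : ℕ, (c - (i:ℝ))^d
      = ∑ k ∈ range (d+1), c^k * (-1)^(d-k) * (i:ℝ)^(d-k) * (d.choose k : ℝ) := by
    intro i
    have := add_pow c (-(i:ℝ)) d
    rw [sub_eq_add_neg]
    rw [this]
    apply sum_congr rfl
    intro k hk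
    rw [neg_pow]
    ring
  calc ∑ i ∈ range (M+1), (-1:ℝ)^i * (M.choose i : ℝ) * (c - i)^d
      = ∑ i ∈ range (M+1), ∑ k ∈ range (d+1),
          (-1:ℝ)^i * (M.choose i : ℝ) * (c^k * (-1)^(d-k) * (i:ℝ)^(d-k) * (d.choose k : ℝ)) := by
        apply sum_congr rfl
        intro i _
        rw [expand i, mul_sum]
    _ = ∑ k ∈ range (d+1), ∑ i ∈ range (M+1),
          (-1:ℝ)^i * (M.choose i : ℝ) * (c^k * (-1)^(d-k) * (i:ℝ)^(d-k) * (d.choose k : ℝ)) :=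
        Finset.sum_comm
    _ = ∑ k ∈ range (d+1), (c^k * (-1)^(d-k) * (d.choose k : ℝ)) * Ssum M (d-k) := by
        apply sum_congr rfl
        intro k _
        rw [Ssum, mul_sum]
        apply sum_congr rfl
        intro i _
        ring
    _ = 0 := by
        apply sum_eq_zero
        intro k hk
        rw [Finset.mem_range] at hk
        rw [Ssum_zero_of_lt M (d-k) (by omega)]
        ring

/-- key sum: `∑ (-1)^i C(M,i) (c-i)^M = M!`. -/
lemma keysum_eq (M : ℕ) (c : ℝ) :
    ∑ i ∈ range (M+1), (-1:ℝ)^i * (M.choose i : ℝ) * (c - i)^M = (M.factorial : ℝ) := by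
  have expand : ∀ i : ℕ, (c - (i:ℝ))^M
      = ∑ k ∈ range (M+1), c^k * (-1)^(M-k) * (i:ℝ)^(M-k) * (M.choose k : ℝ) := by
    intro i
    have := add_pow c (-(i:ℝ)) M
    rw [sub_eq_add_neg, this]
    apply sum_congr rfl
    intro k hk
    rw [neg_pow]
    ring
  calc ∑ i ∈ range (M+1), (-1:ℝ)^i * (M.choose i : ℝ) * (c - i)^M
      = ∑ i ∈ range (M+1), ∑ k ∈ range (M+1),
          (-1:ℝ)^i * (M.choose i : ℝ) * (c^k * (-1)^(M-k) * (i:ℝ)^(M-k) * (M.choose k : ℝ)) := by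
        apply sum_congr rfl
        intro i _
        rw [expand i, mul_sum]
    _ = ∑ k ∈ range (M+1), ∑ i ∈ range (M+1),
          (-1:ℝ)^i * (M.choose i : ℝ) * (c^k * (-1)^(M-k) * (i:ℝ)^(M-k) * (M.choose k : ℝ)) :=
        Finset.sum_comm
    _ = ∑ k ∈ range (M+1), (c^k * (-1)^(M-k) * (M.choose k : ℝ)) * Ssum M (M-k) := by
        apply sum_congr rfl
        intro k _
        rw [Ssum, mul_sum]
        apply sum_congr rfl
        intro i _
        ring
    _ = (M.factorial : ℝ) := by
        rw [Finset.sum_eq_single 0]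
        · simp only [Nat.sub_zero, pow_zero, Nat.choose_zero_right, Nat.cast_one]
          rw [Ssum_diag]
          rw [show (1:ℝ) * (-1)^M * 1 * ((-1)^M * (M.factorial:ℝ)) = ((-1)^M * (-1)^M) * (M.factorial:ℝ) by ring]
          rw [← pow_add, ← two_mul, pow_mul]
          norm_num
        · intro k hk hk0
          rw [Ssum_zero_of_lt M (M-k) (by rw [Finset.mem_range] at hk; omega)]
          ring
        · intro h
          exact absurd (Finset.mem_range.mpr (by omega)) h

section CB
open Finset

lemma cardinalB_of_nonpos {m : ℕ} (hm : 1 ≤ m) {x : ℝ} (hx : x ≤ 0) : cardinalB m x = 0 := by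
  rw [cardinalB]
  rw [Finset.sum_eq_zero, zero_div]
  intro i _
  have : max (x - (i:ℕ)) 0 = 0 := by
    apply max_eq_right
    have : (0:ℝ) ≤ (i:ℕ) := Nat.cast_nonneg i
    linarith
  rw [this, zero_pow (by omega : m ≠ 0), mul_zero]

lemma cardinalB_of_ge {m : ℕ} {x : ℝ} (hx : (m:ℝ) + 1 ≤ x) : cardinalB m x = 0 := by
  rw [cardinalB]
  have h : ∀ i ∈ range (m+2), (-1:ℝ)^i * (((m+1).choose i : ℕ) : ℝ) * (max (x - i) 0)^m
      = (-1:ℝ)^i * (((m+1).choose i : ℕ) : ℝ) * (x - i)^m := by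
    intro i hi
    rw [Finset.mem_range] at hi
    have : (i:ℝ) ≤ (m:ℝ) + 1 := by
      have : (i:ℝ) ≤ ((m+1 : ℕ) : ℝ) := by exact_mod_cast Nat.lt_succ_iff.mp hi
      push_cast at this; linarith
    rw [max_eq_left (by linarith)]
  rw [Finset.sum_congr rfl h]
  have := keysum_lt (m+1) m (by omega) x
  rw [show (m+1)+1 = m+2 by omega] at this
  rw [this, zero_div]

lemma cardinalB_ne_zero {m : ℕ} (hm : 1 ≤ m) {x : ℝ} (h : cardinalB m x ≠ 0) :
    0 < x ∧ x < (m:ℝ)+1 := by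
  constructor
  · by_contra hx
    exact h (cardinalB_of_nonpos hm (by linarith [not_lt.mp hx]))
  · by_contra hx
    exact h (cardinalB_of_ge (by linarith [not_lt.mp hx]))

/-- generic diagonal collection of a double sum. -/
lemma collect (A B : ℕ) (f g φ : ℕ → ℝ) (hf : ∀ i, A ≤ i → f i = 0) (hg : ∀ j, B ≤ j → g j = 0) :
    ∑ i ∈ range A, ∑ j ∈ range B, f i * g j * φ (i+j)
      = ∑ s ∈ range (A+B), (∑ p ∈ range (s+1), f p * g (s-p)) * φ s := by
  have inner : ∀ i : ℕ, ∑ j ∈ range B, f i * g j * φ (i+j)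
      = ∑ j ∈ range (A+B), f i * g j * φ (i+j) := by
    intro i
    apply Finset.sum_subset (Finset.range_subset_range.mpr (Nat.le_add_left B A))
    intro j _ hj
    rw [Finset.mem_range, not_lt] at hj
    rw [hg j hj]; ring
  have step1 : ∑ i ∈ range A, ∑ j ∈ range B, f i * g j * φ (i+j)
      = ∑ i ∈ range (A+B), ∑ j ∈ range (A+B), f i * g j * φ (i+j) := by
    rw [Finset.sum_congr rfl (fun i _ => inner i)]
    apply Finset.sum_subset (Finset.range_subset_range.mpr (Nat.le_add_right A B))
    intro i _ hi
    rw [Finset.mem_range, not_lt] at hi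
    apply Finset.sum_eq_zero
    intro j _
    rw [hf i hi]; ring
  have step2 : ∑ i ∈ range (A+B), ∑ j ∈ range (A+B), f i * g j * φ (i+j)
      = ∑ p ∈ (range (A+B)) ×ˢ (range (A+B)), f p.1 * g p.2 * φ (p.1+p.2) := by
    rw [Finset.sum_product' (range (A+B)) (range (A+B)) (fun i j => f i * g j * φ (i+j))]
  have step3 : ∑ p ∈ (range (A+B)) ×ˢ (range (A+B)), f p.1 * g p.2 * φ (p.1+p.2)
      = ∑ p ∈ (range (A+B)).biUnion Finset.HasAntidiagonal.antidiagonal, f p.1 * g p.2 * φ (p.1+p.2) := by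
    symm
    apply Finset.sum_subset
    · intro p hp
      rw [Finset.mem_biUnion] at hp
      obtain ⟨s, hs, hps⟩ := hp
      rw [Finset.mem_range] at hs
      rw [Finset.HasAntidiagonal.mem_antidiagonal] at hps
      rw [Finset.mem_product, Finset.mem_range, Finset.mem_range]
      omega
    · intro p _ hp
      rw [Finset.mem_biUnion] at hp
      push_neg at hp
      have : A + B ≤ p.1 + p.2 := by
        by_contra hlt
        rw [not_le] at hlt
        exact hp (p.1+p.2) (Finset.mem_range.mpr hlt) (Finset.HasAntidiagonal.mem_antidiagonal.mpr rfl)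
      rcases (by omega : A ≤ p.1 ∨ B ≤ p.2) with h | h
      · rw [hf _ h]; ring
      · rw [hg _ h]; ring
  have step4 : ∑ p ∈ (range (A+B)).biUnion Finset.HasAntidiagonal.antidiagonal, f p.1 * g p.2 * φ (p.1+p.2)
      = ∑ s ∈ range (A+B), ∑ p ∈ Finset.HasAntidiagonal.antidiagonal s, f p.1 * g p.2 * φ (p.1+p.2) := by
    apply Finset.sum_biUnion
    intro s _ s' _ hss
    apply Finset.disjoint_left.mpr
    intro p hp hp'
    rw [Finset.HasAntidiagonal.mem_antidiagonal] at hp hp'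
    omega
  rw [step1, step2, step3, step4]
  apply sum_congr rfl
  intro s _
  calc ∑ p ∈ Finset.HasAntidiagonal.antidiagonal s, f p.1 * g p.2 * φ (p.1+p.2)
      = ∑ p ∈ Finset.HasAntidiagonal.antidiagonal s, f p.1 * g p.2 * φ s := by
        apply sum_congr rfl
        intro p hp
        rw [Finset.HasAntidiagonal.mem_antidiagonal] at hp
        rw [hp]
    _ = (∑ p ∈ Finset.HasAntidiagonal.antidiagonal s, f p.1 * g p.2) * φ s := by
        rw [Finset.sum_mul]
    _ = (∑ p ∈ range (s+1), f p * g (s-p)) * φ s := by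
        rw [Finset.Nat.sum_antidiagonal_eq_sum_range_succ_mk]

lemma alt_partial (m : ℕ) : ∀ s : ℕ, s ≤ m →
    ∑ j ∈ range (s+1), (-1:ℝ)^j * ((m+1).choose j : ℝ) = (-1)^s * (m.choose s : ℝ) := by
  intro s
  induction s with
  | zero => simp
  | succ s ih =>
    intro hs
    rw [sum_range_succ, ih (by omega)]
    rw [show (m+1).choose (s+1) = m.choose s + m.choose (s+1) from Nat.choose_succ_succ m s]
    push_cast
    ring

/-- windowed partition of unity for the cardinal B-spline. -/
lemma cardinalB_window {m : ℕ} (hm : 1 ≤ m) (u : ℝ) (K : ℤ) (h1 : (K:ℝ) ≤ u) (h2 : u < (K:ℝ)+1) :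
    ∑ k ∈ Finset.Icc (K - (m:ℤ)) K, cardinalB m (u - k) = 1 := by
  have hmap : Finset.Icc (K - (m:ℤ)) K
      = Finset.map ⟨fun k' : ℕ => K - (m:ℤ) + k', @id (Function.Injective fun k' : ℕ => K - (m:ℤ) + k') (fun a b h => by simpa using h)⟩ (range (m+1)) := by
    ext k
    simp only [Finset.mem_Icc, Finset.mem_map, Finset.mem_range, Function.Embedding.coeFn_mk]
    constructor
    · intro hk; exact ⟨(k - (K - m)).toNat, by omega, by omega⟩
    · rintro ⟨a, ha, rfl⟩; omega
  rw [hmap, Finset.sum_map]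
  simp only [Function.Embedding.coeFn_mk]
  set y : ℝ := u - (K:ℝ) + (m:ℝ) with hy
  have hy0 : (m:ℝ) ≤ y := by rw [hy]; linarith
  have hy1 : y < (m:ℝ) + 1 := by rw [hy]; linarith
  set φ : ℕ → ℝ := fun s => (max (y - s) 0)^m with hφ
  set f : ℕ → ℝ := fun p => if p < m+1 then 1 else 0 with hf
  set g : ℕ → ℝ := fun j => (-1:ℝ)^j * ((m+1).choose j : ℝ) with hg
  have hcard : ∀ k' ∈ range (m+1), cardinalB m (u - ((K - (m:ℤ) + (k':ℤ) : ℤ) : ℝ))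
      = (∑ j ∈ range (m+2), f k' * g j * φ (k' + j)) / (m.factorial : ℝ) := by
    intro k' hk'
    rw [Finset.mem_range] at hk'
    rw [cardinalB]
    congr 1
    apply Finset.sum_congr rfl
    intro j _
    simp only [hf, hφ, hg, if_pos hk']
    have harg : u - ((K - (m:ℤ) + (k':ℤ) : ℤ) : ℝ) - (j:ℕ) = y - ((k' + j : ℕ) : ℝ) := by
      rw [hy]; push_cast; ring
    rw [harg]
    ring
  calc ∑ k' ∈ range (m+1), cardinalB m (u - ((K - (m:ℤ) + (k':ℤ) : ℤ) : ℝ))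
      = ∑ k' ∈ range (m+1), (∑ j ∈ range (m+2), f k' * g j * φ (k' + j)) / (m.factorial : ℝ) :=
        Finset.sum_congr rfl hcard
    _ = (∑ k' ∈ range (m+1), ∑ j ∈ range (m+2), f k' * g j * φ (k' + j)) / (m.factorial : ℝ) := by
        rw [Finset.sum_div]
    _ = (∑ s ∈ range ((m+1)+(m+2)), (∑ p ∈ range (s+1), f p * g (s-p)) * φ s) / (m.factorial : ℝ) := by
        rw [collect (m+1) (m+2) f g φ
          (fun i hi => by simp only [hf]; rw [if_neg (by omega : ¬ i < m+1)])
          (fun j hj => by simp only [hg]; rw [Nat.choose_eq_zero_of_lt (by omega)]; simp)]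
    _ = (∑ s ∈ range (m+1), (∑ p ∈ range (s+1), f p * g (s-p)) * φ s) / (m.factorial : ℝ) := by
        congr 1
        symm
        apply Finset.sum_subset (Finset.range_subset_range.mpr (by omega))
        intro s _ hs
        rw [Finset.mem_range, not_lt] at hs
        have hφ0 : φ s = 0 := by
          simp only [hφ]
          have hcast : (m:ℝ) + 1 ≤ (s:ℕ) := by exact_mod_cast hs
          rw [max_eq_right (by linarith)]
          exact zero_pow (by omega)
        rw [hφ0, mul_zero]
    _ = (∑ s ∈ range (m+1), (-1:ℝ)^s * (m.choose s : ℝ) * (y - s)^m) / (m.factorial : ℝ) := by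
        congr 1
        apply Finset.sum_congr rfl
        intro s hs
        rw [Finset.mem_range] at hs
        have e1 : ∑ p ∈ range (s+1), f p * g (s-p) = ∑ p ∈ range (s+1), g (s-p) := by
          apply Finset.sum_congr rfl
          intro p hp
          rw [Finset.mem_range] at hp
          simp only [hf]
          rw [if_pos (by omega : p < m+1), one_mul]
        have e2 : ∑ p ∈ range (s+1), g (s-p) = ∑ j ∈ range (s+1), g j := by
          have := Finset.sum_range_reflect g (s+1)
          simpa using this
        have e3 : φ s = (y - s)^m := by
          simp only [hφ]
          rw [max_eq_left]
          have : (s:ℝ) ≤ (m:ℝ) := by exact_mod_cast (by omega : s ≤ m)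
          linarith
        rw [e1, e2, e3, hg, alt_partial m s (by omega)]
    _ = 1 := by
        rw [keysum_eq m y, div_self]
        exact_mod_cast Nat.factorial_ne_zero m


lemma cardinalB_outside_window {m : ℕ} (hm : 1 ≤ m) {u : ℝ} {K k : ℤ} (h1 : (K:ℝ) ≤ u)
    (h2 : u < (K:ℝ)+1) (hk : k ∉ Finset.Icc (K - (m:ℤ)) K) : cardinalB m (u - k) = 0 := by
  rw [Finset.mem_Icc] at hk
  rcases (by omega : k < K - (m:ℤ) ∨ K < k) with h | h
  · apply cardinalB_of_ge
    have : ((k:ℝ)) ≤ (K:ℝ) - (m:ℝ) - 1 := by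
      have : (k:ℝ) + 1 ≤ ((K - (m:ℤ) : ℤ) : ℝ) := by exact_mod_cast h
      push_cast at this ⊢
      linarith
    linarith
  · apply cardinalB_of_nonpos hm
    have : (K:ℝ) + 1 ≤ (k:ℝ) := by exact_mod_cast h
    linarith

section TwoScale
open Polynomial

lemma coeff_sum_CmulXpow (K : ℕ) (c : ℕ → ℝ) (e : ℕ → ℕ) (j : ℕ) :
    (∑ k ∈ range K, Polynomial.C (c k) * Polynomial.X ^ (e k)).coeff j
      = ∑ k ∈ range K, (if e k = j then c k else 0) := by
  rw [Polynomial.finset_sum_coeff]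
  apply Finset.sum_congr rfl
  intro k _
  rw [Polynomial.coeff_C_mul, Polynomial.coeff_X_pow]
  by_cases h : j = e k
  · rw [if_pos h, if_pos h.symm, mul_one]
  · rw [if_neg h, if_neg (fun hh => h hh.symm), mul_zero]

lemma coeff_sum_CmulXpow' (K : ℕ) (c : ℕ → ℝ) (j : ℕ) :
    (∑ k ∈ range K, Polynomial.C (c k) * Polynomial.X ^ k).coeff j
      = ∑ k ∈ range K, (if k = j then c k else 0) := by
  rw [Polynomial.finset_sum_coeff]
  apply Finset.sum_congr rfl
  intro k _
  rw [Polynomial.coeff_C_mul, Polynomial.coeff_X_pow]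
  by_cases h : j = k
  · rw [if_pos h, if_pos h.symm, mul_one]
  · rw [if_neg h, if_neg (fun hh => h hh.symm), mul_zero]

lemma one_sub_X_pow_eq (M : ℕ) :
    ((1 : Polynomial ℝ) - Polynomial.X)^M
      = ∑ k ∈ range (M+1), Polynomial.C ((-1:ℝ)^k * (M.choose k : ℝ)) * Polynomial.X ^ k := by
  have h := add_pow (-Polynomial.X : Polynomial ℝ) 1 M
  rw [show (1 : Polynomial ℝ) - Polynomial.X = -Polynomial.X + 1 by ring, h]
  apply Finset.sum_congr rfl
  intro k _
  rw [one_pow, mul_one, neg_pow]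
  rw [show ((M.choose k : ℕ) : Polynomial ℝ) = Polynomial.C ((M.choose k : ℕ) : ℝ) by
    rw [Polynomial.C_eq_natCast]]
  rw [show ((-1 : Polynomial ℝ))^k = Polynomial.C ((-1:ℝ)^k) by
    rw [map_pow, map_neg, map_one]]
  rw [Polynomial.C_mul]
  ring

lemma one_sub_X_sq_pow_eq (M : ℕ) :
    ((1 : Polynomial ℝ) - Polynomial.X^2)^M
      = ∑ k ∈ range (M+1), Polynomial.C ((-1:ℝ)^k * (M.choose k : ℝ)) * Polynomial.X ^ (2*k) := by
  have h := add_pow (-(Polynomial.X^2) : Polynomial ℝ) 1 M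
  rw [show (1 : Polynomial ℝ) - Polynomial.X^2 = -(Polynomial.X^2) + 1 by ring, h]
  apply Finset.sum_congr rfl
  intro k _
  rw [one_pow, mul_one, neg_pow]
  rw [show ((M.choose k : ℕ) : Polynomial ℝ) = Polynomial.C ((M.choose k : ℕ) : ℝ) by
    rw [Polynomial.C_eq_natCast]]
  rw [show ((-1 : Polynomial ℝ))^k = Polynomial.C ((-1:ℝ)^k) by
    rw [map_pow, map_neg, map_one]]
  rw [Polynomial.C_mul, pow_mul]
  ring

/-- the Cauchy-product coefficient identity for the two-scale relation. -/
lemma twoscale_coeff (m s : ℕ) :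
    ∑ p ∈ range (s+1), ((m+1).choose p : ℝ) * ((-1)^(s-p) * ((m+1).choose (s-p) : ℝ))
      = ∑ k ∈ range (m+2), (if 2*k = s then (-1:ℝ)^k * ((m+1).choose k : ℝ) else 0) := by
  have key : ((Polynomial.X + 1 : Polynomial ℝ)^(m+1) * ((1:Polynomial ℝ) - Polynomial.X)^(m+1)).coeff s
      = (((1 : Polynomial ℝ) - Polynomial.X^2)^(m+1)).coeff s := by
    rw [← mul_pow]
    congr 2
    ring
  rw [Polynomial.coeff_mul] at key
  have lhs_eq : ∑ x ∈ Finset.HasAntidiagonal.antidiagonal s,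
      ((Polynomial.X + 1 : Polynomial ℝ)^(m+1)).coeff x.1 * (((1:Polynomial ℝ) - Polynomial.X)^(m+1)).coeff x.2
      = ∑ p ∈ range (s+1), ((m+1).choose p : ℝ) * ((-1)^(s-p) * ((m+1).choose (s-p) : ℝ)) := by
    rw [Finset.Nat.sum_antidiagonal_eq_sum_range_succ_mk]
    dsimp only
    apply Finset.sum_congr rfl
    intro p hp
    rw [Polynomial.coeff_X_add_one_pow]
    congr 1
    rw [one_sub_X_pow_eq (m+1), coeff_sum_CmulXpow' (m+1+1) _ (s-p)]
    rw [Finset.sum_ite_eq' (range (m+1+1)) (s-p)]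
    by_cases h : s - p < m + 2
    · rw [if_pos (Finset.mem_range.mpr (by omega : s - p < m+1+1))]
    · rw [if_neg (fun hc => h (by have := Finset.mem_range.mp hc; omega))]
      rw [Nat.choose_eq_zero_of_lt (by omega), Nat.cast_zero, mul_zero]
  have rhs_eq : (((1 : Polynomial ℝ) - Polynomial.X^2)^(m+1)).coeff s
      = ∑ k ∈ range (m+2), (if 2*k = s then (-1:ℝ)^k * ((m+1).choose k : ℝ) else 0) := by
    rw [one_sub_X_sq_pow_eq (m+1), coeff_sum_CmulXpow (m+2) _ (fun k => 2*k) s]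
  rw [← lhs_eq, key, rhs_eq]

/-- the two-scale relation for the cardinal B-spline. -/
lemma cardinalB_twoscale {m : ℕ} (hm : 1 ≤ m) (t : ℝ) :
    cardinalB m t = ∑ i ∈ range (m+2), ((m+1).choose i : ℝ)/2^m * cardinalB m (2*t - i) := by
  set φ : ℕ → ℝ := fun s => (max (2*t - s) 0)^m with hφ
  set f : ℕ → ℝ := fun i => ((m+1).choose i : ℝ) with hf
  set g : ℕ → ℝ := fun j => (-1:ℝ)^j * ((m+1).choose j : ℝ) with hg
  have h2m : ((2:ℝ)^m) ≠ 0 := by positivity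
  have hrhs : ∑ i ∈ range (m+2), ((m+1).choose i : ℝ)/2^m * cardinalB m (2*t - i)
      = (∑ i ∈ range (m+2), ∑ j ∈ range (m+2), f i * g j * φ (i + j)) / (2^m * (m.factorial : ℝ)) := by
    rw [Finset.sum_div]
    apply Finset.sum_congr rfl
    intro i _
    rw [cardinalB, div_mul_div_comm]
    congr 1
    rw [Finset.mul_sum]
    apply Finset.sum_congr rfl
    intro j _
    simp only [hf, hg, hφ]
    rw [show 2*t - (i:ℝ) - (j:ℝ) = 2*t - ((i + j : ℕ) : ℝ) by push_cast; ring]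
    ring
  rw [hrhs, collect (m+2) (m+2) f g φ
      (fun i hi => by simp only [hf]; rw [Nat.choose_eq_zero_of_lt (by omega)]; simp)
      (fun j hj => by simp only [hg]; rw [Nat.choose_eq_zero_of_lt (by omega)]; simp)]
  have hc : ∀ s ∈ range ((m+2)+(m+2)), (∑ p ∈ range (s+1), f p * g (s-p)) * φ s
      = ∑ k ∈ range (m+2), (if 2*k = s then (-1:ℝ)^k * ((m+1).choose k : ℝ) * φ s else 0) := by
    intro s _
    rw [show (∑ p ∈ range (s+1), f p * g (s-p))
        = ∑ k ∈ range (m+2), (if 2*k = s then (-1:ℝ)^k * ((m+1).choose k : ℝ) else 0) from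
      twoscale_coeff m s]
    rw [Finset.sum_mul]
    apply Finset.sum_congr rfl
    intro k _
    by_cases h : 2*k = s
    · rw [if_pos h, if_pos h]
    · rw [if_neg h, if_neg h, zero_mul]
  rw [Finset.sum_congr rfl hc, Finset.sum_comm]
  have hk5 : ∀ k ∈ range (m+2),
      (∑ s ∈ range ((m+2)+(m+2)), if 2*k = s then (-1:ℝ)^k * ((m+1).choose k : ℝ) * φ s else 0)
      = (-1:ℝ)^k * ((m+1).choose k : ℝ) * (2^m * (max (t - k) 0)^m) := by
    intro k hk
    rw [Finset.mem_range] at hk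
    rw [Finset.sum_ite_eq (range ((m+2)+(m+2))) (2*k)
      (fun s => (-1:ℝ)^k * ((m+1).choose k : ℝ) * φ s)]
    rw [if_pos (Finset.mem_range.mpr (by omega))]
    congr 1
    simp only [hφ]
    rw [show 2*t - ((2*k : ℕ):ℝ) = 2 * (t - k) by push_cast; ring]
    rw [show ((2:ℝ)*(t - (k:ℝ)) ⊔ 0) = 2*((t - (k:ℝ)) ⊔ 0) by
      rw [mul_max_of_nonneg _ _ (by norm_num : (0:ℝ) ≤ 2), mul_zero]]
    rw [mul_pow]
  rw [Finset.sum_congr rfl hk5]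
  rw [show ∑ k ∈ range (m+2), (-1:ℝ)^k * ((m+1).choose k : ℝ) * (2^m * (max (t - k) 0)^m)
      = 2^m * ∑ k ∈ range (m+2), (-1:ℝ)^k * ((m+1).choose k : ℝ) * (max (t - k) 0)^m by
    rw [Finset.mul_sum]; apply Finset.sum_congr rfl; intro k _; ring]
  rw [mul_div_mul_left _ _ h2m, cardinalB]

end TwoScale

end CB

section Dyadic

lemma pow2pos (ℓ : ℕ) : (0:ℝ) < 2^ℓ := by positivity

lemma ddiv_le_ddiv {ℓ : ℕ} {a b : ℝ} (h : a ≤ b) : a/2^ℓ ≤ b/2^ℓ :=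
  div_le_div_of_nonneg_right h (le_of_lt (pow2pos ℓ))

/-- choose a level-`ℓ` unit dyadic interval inside `[p/2^ℓ, (p+k+1)/2^ℓ]` containing `x`. -/
lemma exists_subinterval {ℓ : ℕ} (p : ℤ) (k : ℕ) {x : ℝ}
    (h1 : (p:ℝ)/2^ℓ ≤ x) (h2 : x ≤ ((p:ℝ) + k + 1)/2^ℓ) :
    ∃ i : ℤ, p ≤ i ∧ i ≤ p + k ∧ (i:ℝ)/2^ℓ ≤ x ∧ x ≤ ((i:ℝ)+1)/2^ℓ := by
  have hpos := pow2pos ℓ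
  have hy1 : (p:ℝ) ≤ 2^ℓ * x := by
    rw [div_le_iff₀ hpos] at h1
    linarith [h1]
  have hy2 : 2^ℓ * x ≤ (p:ℝ) + k + 1 := by
    rw [le_div_iff₀ hpos] at h2
    linarith [h2]
  set y : ℝ := 2^ℓ * x with hy
  have hF1 : p ≤ ⌊y⌋ := Int.le_floor.mpr hy1
  rcases le_or_gt ⌊y⌋ (p + k) with hc | hc
  · refine ⟨⌊y⌋, hF1, hc, ?_, ?_⟩
    · rw [div_le_iff₀ hpos]
      have := Int.floor_le y
      linarith
    · rw [le_div_iff₀ hpos]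
      have := Int.lt_floor_add_one y
      push_cast
      linarith
  · refine ⟨p + k, by omega, le_refl _, ?_, ?_⟩
    · rw [div_le_iff₀ hpos]
      have h3 : ((p + k + 1 : ℤ):ℝ) ≤ y := by
        exact_mod_cast Int.le_floor.mp (by omega : ((p+k+1 : ℤ)) ≤ ⌊y⌋)
      push_cast at h3 ⊢
      linarith
    · rw [le_div_iff₀ hpos]
      push_cast
      linarith
  
/-- uniqueness of the dyadic interval: open-interval membership pins the index. -/
lemma subinterval_unique {ℓ : ℕ} {i i' : ℤ} {x : ℝ}
    (h1 : (i:ℝ)/2^ℓ < x) (h2 : x < ((i:ℝ)+1)/2^ℓ)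
    (h3 : (i':ℝ)/2^ℓ ≤ x) (h4 : x ≤ ((i':ℝ)+1)/2^ℓ) : i' = i := by
  have hpos := pow2pos ℓ
  rw [div_lt_iff₀ hpos] at h1
  rw [lt_div_iff₀ hpos] at h2
  rw [div_le_iff₀ hpos] at h3
  rw [le_div_iff₀ hpos] at h4
  have e1 : (i':ℝ) < (i:ℝ) + 1 := by nlinarith
  have e2 : (i:ℝ) < (i':ℝ) + 1 := by nlinarith
  have : i' < i + 1 := by exact_mod_cast e1
  have : i < i' + 1 := by exact_mod_cast e2
  omega

/-- rescale a dyadic interval to a deeper level. -/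
lemma interval_rescale {ℓ k : ℕ} (p : ℤ) :
    ((2^k * p : ℤ):ℝ)/2^(ℓ+k) = (p:ℝ)/2^ℓ := by
  have h1 := pow2pos ℓ
  have h2 := pow2pos k
  rw [pow_add]
  push_cast
  field_simp

end Dyadic

section Geo2D

lemma dcast_le {ℓ : ℕ} {a b : ℤ} (h : a ≤ b) : (a:ℝ)/2^ℓ ≤ (b:ℝ)/2^ℓ :=
  (div_le_div_iff_of_pos_right (pow2pos ℓ)).mpr (by exact_mod_cast h)

lemma subdiv1D {ℓ k : ℕ} {p : ℤ} {x : ℝ} (h1 : (p:ℝ)/2^ℓ ≤ x) (h2 : x ≤ ((p:ℝ)+1)/2^ℓ) :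
    ∃ i : ℤ, (i:ℝ)/2^(ℓ+k) ≤ x ∧ x ≤ ((i:ℝ)+1)/2^(ℓ+k) ∧
      (p:ℝ)/2^ℓ ≤ (i:ℝ)/2^(ℓ+k) ∧ ((i:ℝ)+1)/2^(ℓ+k) ≤ ((p:ℝ)+1)/2^ℓ := by
  have hk1 : (1:ℕ) ≤ 2^k := Nat.one_le_two_pow
  have e1 : ((2^k*p : ℤ):ℝ)/2^(ℓ+k) = (p:ℝ)/2^ℓ := interval_rescale p
  have e2 : ((2^k*(p+1) : ℤ):ℝ)/2^(ℓ+k) = ((p:ℝ)+1)/2^ℓ := by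
    rw [interval_rescale (p+1)]
    push_cast
    ring
  have hnum : ((2^k*p : ℤ):ℝ) + ((2^k - 1 : ℕ):ℝ) + 1 = ((2^k*(p+1) : ℤ):ℝ) := by
    push_cast [hk1]
    ring
  obtain ⟨i, hi1, hi2, hi3, hi4⟩ := exists_subinterval (ℓ := ℓ+k) (2^k*p) (2^k - 1) (x := x)
    (le_of_eq_of_le e1 h1)
    (le_of_le_of_eq h2 (by rw [hnum, e2]))
  have hcast : ((2^k - 1 : ℕ):ℤ) = 2^k - 1 := by push_cast [hk1]; ring
  rw [hcast] at hi2
  refine ⟨i, hi3, hi4, ?_, ?_⟩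
  · rw [← e1]
    exact dcast_le hi1
  · rw [← e2]
    have heq : ((i:ℝ)+1) = ((i+1 : ℤ):ℝ) := by push_cast; ring
    rw [heq]
    apply dcast_le
    have hx : (2:ℤ)^k*(p+1) = 2^k*p + 2^k := by ring
    linarith

lemma mem_cellL {ℓ : ℕ} {p : ℤ × ℤ} {z : ℝ × ℝ} :
    z ∈ cellL ℓ p ↔ ((p.1:ℝ)/2^ℓ ≤ z.1 ∧ z.1 ≤ ((p.1:ℝ)+1)/2^ℓ) ∧
      ((p.2:ℝ)/2^ℓ ≤ z.2 ∧ z.2 ≤ ((p.2:ℝ)+1)/2^ℓ) := by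
  rw [cellL, Set.mem_prod, Set.mem_Icc, Set.mem_Icc]

lemma mem_suppL {m n ℓ : ℕ} {q : ℤ × ℤ} {z : ℝ × ℝ} :
    z ∈ suppL m n ℓ q ↔ ((q.1:ℝ)/2^ℓ ≤ z.1 ∧ z.1 ≤ ((q.1:ℝ)+m+1)/2^ℓ) ∧
      ((q.2:ℝ)/2^ℓ ≤ z.2 ∧ z.2 ≤ ((q.2:ℝ)+n+1)/2^ℓ) := by
  rw [suppL, Set.mem_prod, Set.mem_Icc, Set.mem_Icc]

lemma mem_cellUL {ℓ : ℕ} {S : Finset (ℤ × ℤ)} {z : ℝ × ℝ} :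
    z ∈ cellUL ℓ S ↔ ∃ p ∈ S, z ∈ cellL ℓ p := by
  rw [cellUL]; simp

lemma cellL_subset_cellUL {ℓ : ℕ} {S : Finset (ℤ × ℤ)} {p : ℤ × ℤ} (hp : p ∈ S) :
    cellL ℓ p ⊆ cellUL ℓ S :=
  Set.subset_biUnion_of_mem hp

lemma cellUL_empty (ℓ : ℕ) : cellUL ℓ (∅ : Finset (ℤ × ℤ)) = ∅ := by
  simp [cellUL]

lemma isClosed_cellL (ℓ : ℕ) (p : ℤ × ℤ) : IsClosed (cellL ℓ p) :=
  IsClosed.prod isClosed_Icc isClosed_Icc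

lemma isClosed_cellUL (ℓ : ℕ) (S : Finset (ℤ × ℤ)) : IsClosed (cellUL ℓ S) :=
  Set.Finite.isClosed_biUnion S.finite_toSet (fun p _ => isClosed_cellL ℓ p)

lemma interior_cellL (ℓ : ℕ) (p : ℤ × ℤ) :
    interior (cellL ℓ p) = Set.Ioo ((p.1:ℝ)/2^ℓ) (((p.1:ℝ)+1)/2^ℓ) ×ˢ
      Set.Ioo ((p.2:ℝ)/2^ℓ) (((p.2:ℝ)+1)/2^ℓ) := by
  rw [cellL, interior_prod_eq, interior_Icc, interior_Icc]

lemma cellL_lt {ℓ : ℕ} (a : ℤ) : (a:ℝ)/2^ℓ < ((a:ℝ)+1)/2^ℓ :=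
  div_lt_div_of_pos_right (by linarith) (pow2pos ℓ)

lemma closure_interior_cellL (ℓ : ℕ) (p : ℤ × ℤ) :
    closure (interior (cellL ℓ p)) = cellL ℓ p := by
  rw [interior_cellL, closure_prod_eq, closure_Ioo (ne_of_lt (cellL_lt p.1)),
    closure_Ioo (ne_of_lt (cellL_lt p.2)), cellL]

lemma interior_cellL_nonempty (ℓ : ℕ) (p : ℤ × ℤ) : (interior (cellL ℓ p)).Nonempty := by
  rw [interior_cellL]
  exact Set.Nonempty.prod (Set.nonempty_Ioo.mpr (cellL_lt p.1)) (Set.nonempty_Ioo.mpr (cellL_lt p.2))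

lemma cellUL_sub_closure_interior (ℓ : ℕ) (S : Finset (ℤ × ℤ)) :
    cellUL ℓ S ⊆ closure (interior (cellUL ℓ S)) := by
  intro z hz
  rcases mem_cellUL.mp hz with ⟨p, hp, hzp⟩
  have h1 : cellL ℓ p ⊆ closure (interior (cellUL ℓ S)) := by
    rw [← closure_interior_cellL ℓ p]
    exact closure_mono (interior_mono (cellL_subset_cellUL hp))
  exact h1 hzp

lemma suppL_lt1 {ℓ : ℕ} (m : ℕ) (a : ℤ) : (a:ℝ)/2^ℓ < ((a:ℝ)+m+1)/2^ℓ := by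
  apply div_lt_div_of_pos_right _ (pow2pos ℓ)
  have : (0:ℝ) ≤ m := Nat.cast_nonneg m
  linarith

lemma interior_suppL (m n ℓ : ℕ) (q : ℤ × ℤ) :
    interior (suppL m n ℓ q) = Set.Ioo ((q.1:ℝ)/2^ℓ) (((q.1:ℝ)+m+1)/2^ℓ) ×ˢ
      Set.Ioo ((q.2:ℝ)/2^ℓ) (((q.2:ℝ)+n+1)/2^ℓ) := by
  rw [suppL, interior_prod_eq, interior_Icc, interior_Icc]

lemma closure_interior_suppL (m n ℓ : ℕ) (q : ℤ × ℤ) :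
    closure (interior (suppL m n ℓ q)) = suppL m n ℓ q := by
  rw [interior_suppL, closure_prod_eq, closure_Ioo (ne_of_lt (suppL_lt1 m q.1)),
    closure_Ioo (ne_of_lt (suppL_lt1 n q.2)), suppL]

lemma isPreconnected_interior_suppL (m n ℓ : ℕ) (q : ℤ × ℤ) :
    IsPreconnected (interior (suppL m n ℓ q)) := by
  rw [interior_suppL]
  exact ((convex_Ioo _ _).prod (convex_Ioo _ _)).isPreconnected

lemma mem_interior_suppL_of_Bs_ne_zero {m n ℓ : ℕ} (hm : 1 ≤ m) (hn : 1 ≤ n) {q : ℤ × ℤ}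
    {z : ℝ × ℝ} (h : Bs m n ℓ q z ≠ 0) : z ∈ interior (suppL m n ℓ q) := by
  rw [Bs] at h
  have h1 : cardinalB m (2^ℓ * z.1 - q.1) ≠ 0 := fun hc => h (by rw [hc, zero_mul])
  have h2 : cardinalB n (2^ℓ * z.2 - q.2) ≠ 0 := fun hc => h (by rw [hc, mul_zero])
  have hb1 := cardinalB_ne_zero hm h1
  have hb2 := cardinalB_ne_zero hn h2
  rw [interior_suppL, Set.mem_prod, Set.mem_Ioo, Set.mem_Ioo]
  have hpos := pow2pos ℓ
  constructor
  · constructor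
    · rw [div_lt_iff₀ hpos]; nlinarith [hb1.1]
    · rw [lt_div_iff₀ hpos]; nlinarith [hb1.2]
  · constructor
    · rw [div_lt_iff₀ hpos]; nlinarith [hb2.1]
    · rw [lt_div_iff₀ hpos]; nlinarith [hb2.2]

lemma supp_meets_interior {m n ℓ : ℕ} (hm : 1 ≤ m) (hn : 1 ≤ n) {q : ℤ × ℤ} {z : ℝ × ℝ}
    {Ω : Set (ℝ × ℝ)} (hΩ : Ω ⊆ closure (interior Ω)) (hz : z ∈ Ω)
    (h : Bs m n ℓ q z ≠ 0) : (suppL m n ℓ q ∩ interior Ω).Nonempty := by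
  have hzo := mem_interior_suppL_of_Bs_ne_zero hm hn h
  have := mem_closure_iff.mp (hΩ hz) (interior (suppL m n ℓ q)) isOpen_interior hzo
  rcases this with ⟨w, hw1, hw2⟩
  exact ⟨w, interior_subset hw1, hw2⟩

/-- subdivision: every point of a level-`ℓ` cell lies in a level-`ℓ+k` subcell. -/
lemma cell_subdiv (ℓ k : ℕ) {p : ℤ × ℤ} {z : ℝ × ℝ} (hz : z ∈ cellL ℓ p) :
    ∃ p' : ℤ × ℤ, z ∈ cellL (ℓ+k) p' ∧ cellL (ℓ+k) p' ⊆ cellL ℓ p := by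
  rw [mem_cellL] at hz
  obtain ⟨i, hi1, hi2, hi3, hi4⟩ := subdiv1D (k := k) hz.1.1 hz.1.2
  obtain ⟨j, hj1, hj2, hj3, hj4⟩ := subdiv1D (k := k) hz.2.1 hz.2.2
  refine ⟨(i, j), mem_cellL.mpr ⟨⟨hi1, hi2⟩, ⟨hj1, hj2⟩⟩, ?_⟩
  intro w hw
  rw [mem_cellL] at hw ⊢
  constructor
  · exact ⟨le_trans hi3 hw.1.1, le_trans hw.1.2 hi4⟩
  · exact ⟨le_trans hj3 hw.2.1, le_trans hw.2.2 hj4⟩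

/-- two cells of the same level meeting in an interior point coincide. -/
lemma cell_eq_of_interior_meet {ℓ : ℕ} {c c' : ℤ × ℤ} {w : ℝ × ℝ}
    (h1 : w ∈ interior (cellL ℓ c')) (h2 : w ∈ cellL ℓ c) : c = c' := by
  rw [interior_cellL, Set.mem_prod, Set.mem_Ioo, Set.mem_Ioo] at h1
  rw [mem_cellL] at h2
  have e1 := subinterval_unique h1.1.1 h1.1.2 h2.1.1 h2.1.2
  have e2 := subinterval_unique h1.2.1 h1.2.2 h2.2.1 h2.2.2
  exact Prod.ext e1 e2

end Geo2D

section Domain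

variable {S RS : ℕ → Finset (ℤ × ℤ)}

/-- chain of nested domains. -/
lemma cellUL_chain (hnest : ∀ ℓ, cellUL (ℓ + 1) (S (ℓ + 1)) ⊆ cellUL ℓ (S ℓ)) :
    ∀ a b : ℕ, a ≤ b → cellUL b (S b) ⊆ cellUL a (S a) := by
  intro a b hab
  induction b with
  | zero => have : a = 0 := by omega
            subst this; exact subset_rfl
  | succ b ih =>
    rcases Nat.lt_or_ge a (b+1) with h | h
    · exact Set.Subset.trans (hnest b) (ih (by omega))
    · have : a = b+1 := by omega
      subst this; exact subset_rfl

lemma RS_spec (hRS : ∀ ℓ (p : ℤ × ℤ), p ∈ RS ℓ ↔ (cellL ℓ p ⊆ cellUL 0 (S 0) ∧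
      interior (cellL ℓ p) ∩ cellUL (ℓ + 1) (S (ℓ + 1)) = ∅)) :
    ∀ ℓ, cellUL ℓ (RS ℓ) ⊆ cellUL 0 (S 0) := by
  intro ℓ z hz
  rcases mem_cellUL.mp hz with ⟨p, hp, hzp⟩
  exact ((hRS ℓ p).mp hp).1 hzp

/-- the regions `Rℓ` are increasing. -/
lemma R_mono (hRS : ∀ ℓ (p : ℤ × ℤ), p ∈ RS ℓ ↔ (cellL ℓ p ⊆ cellUL 0 (S 0) ∧
      interior (cellL ℓ p) ∩ cellUL (ℓ + 1) (S (ℓ + 1)) = ∅))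
    (hnest : ∀ ℓ, cellUL (ℓ + 1) (S (ℓ + 1)) ⊆ cellUL ℓ (S ℓ)) (ℓ : ℕ) :
    cellUL ℓ (RS ℓ) ⊆ cellUL (ℓ+1) (RS (ℓ+1)) := by
  intro z hz
  rcases mem_cellUL.mp hz with ⟨p, hp, hzp⟩
  obtain ⟨p', hzp', hsub⟩ := cell_subdiv ℓ 1 hzp
  apply cellL_subset_cellUL (S := RS (ℓ+1)) _ hzp'
  rw [hRS (ℓ+1) p']
  constructor
  · exact Set.Subset.trans hsub ((hRS ℓ p).mp hp).1
  · apply Set.eq_empty_of_subset_empty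
    calc interior (cellL (ℓ+1) p') ∩ cellUL (ℓ+2) (S (ℓ+2))
        ⊆ interior (cellL ℓ p) ∩ cellUL (ℓ+1) (S (ℓ+1)) :=
          Set.inter_subset_inter (interior_mono hsub) (hnest (ℓ+1))
      _ = ∅ := ((hRS ℓ p).mp hp).2

lemma R_mono' (hRS : ∀ ℓ (p : ℤ × ℤ), p ∈ RS ℓ ↔ (cellL ℓ p ⊆ cellUL 0 (S 0) ∧
      interior (cellL ℓ p) ∩ cellUL (ℓ + 1) (S (ℓ + 1)) = ∅))
    (hnest : ∀ ℓ, cellUL (ℓ + 1) (S (ℓ + 1)) ⊆ cellUL ℓ (S ℓ)) :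
    ∀ a b : ℕ, a ≤ b → cellUL a (RS a) ⊆ cellUL b (RS b) := by
  intro a b hab
  induction b with
  | zero => have : a = 0 := by omega
            subst this; exact subset_rfl
  | succ b ih =>
    rcases Nat.lt_or_ge a (b+1) with h | h
    · exact Set.Subset.trans (ih (by omega)) (R_mono hRS hnest b)
    · have : a = b+1 := by omega
      subst this; exact subset_rfl

/-- when `S (L+1) = ∅`, the region `R L` is all of `Ω⁰`. -/
lemma R_top (hRS : ∀ ℓ (p : ℤ × ℤ), p ∈ RS ℓ ↔ (cellL ℓ p ⊆ cellUL 0 (S 0) ∧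
      interior (cellL ℓ p) ∩ cellUL (ℓ + 1) (S (ℓ + 1)) = ∅))
    (L : ℕ) (hSL : S (L+1) = ∅) : cellUL 0 (S 0) = cellUL L (RS L) := by
  apply Set.Subset.antisymm
  · intro z hz
    rcases mem_cellUL.mp hz with ⟨p, hp, hzp⟩
    obtain ⟨p', hzp', hsub⟩ := cell_subdiv 0 L hzp
    rw [Nat.zero_add] at hzp' hsub
    apply cellL_subset_cellUL (S := RS L) _ hzp'
    rw [hRS L p']
    refine ⟨Set.Subset.trans hsub (cellL_subset_cellUL hp), ?_⟩
    rw [hSL, cellUL_empty, Set.inter_empty]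
  · exact RS_spec hRS L

/-- each cell of the `T`-domain is not an `RS`-cell, so the interiors are disjoint. -/
lemma int_R_disj_T (hRS : ∀ ℓ (p : ℤ × ℤ), p ∈ RS ℓ ↔ (cellL ℓ p ⊆ cellUL 0 (S 0) ∧
      interior (cellL ℓ p) ∩ cellUL (ℓ + 1) (S (ℓ + 1)) = ∅))
    {ℓ : ℕ} {T : Finset (ℤ × ℤ)} (hT : cellUL ℓ T = cellUL (ℓ+1) (S (ℓ+1))) :
    interior (cellUL ℓ (RS ℓ)) ∩ cellUL ℓ T = ∅ := by
  by_contra hne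
  rcases Set.nonempty_iff_ne_empty.mpr hne with ⟨z, hzR, hzT⟩
  rcases mem_cellUL.mp hzT with ⟨c', hc', hzc'⟩
  have hz2 : z ∈ closure (interior (cellL ℓ c')) := by
    rw [closure_interior_cellL]; exact hzc'
  obtain ⟨w, hw1, hw2⟩ := mem_closure_iff.mp hz2 (interior (cellUL ℓ (RS ℓ))) isOpen_interior hzR
  have hwR : w ∈ cellUL ℓ (RS ℓ) := interior_subset hw1
  rcases mem_cellUL.mp hwR with ⟨c, hc, hwc⟩
  have hcc : c = c' := cell_eq_of_interior_meet hw2 hwc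
  subst hcc
  have hdisj := ((hRS ℓ c).mp hc).2
  obtain ⟨v, hv⟩ := interior_cellL_nonempty ℓ c
  have hvT : v ∈ cellUL (ℓ+1) (S (ℓ+1)) := by
    rw [← hT]
    exact cellL_subset_cellUL hc' (interior_subset hv)
  have : v ∈ interior (cellL ℓ c) ∩ cellUL (ℓ+1) (S (ℓ+1)) := ⟨hv, hvT⟩
  rw [hdisj] at this
  exact this

/-- `Ω⁰ ⊆ Rℓ ∪ Ωℓ⁺¹`. -/
lemma omega0_sub_R_union_T (hRS : ∀ ℓ (p : ℤ × ℤ), p ∈ RS ℓ ↔ (cellL ℓ p ⊆ cellUL 0 (S 0) ∧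
      interior (cellL ℓ p) ∩ cellUL (ℓ + 1) (S (ℓ + 1)) = ∅))
    {ℓ : ℕ} {T : Finset (ℤ × ℤ)} (hT : cellUL ℓ T = cellUL (ℓ+1) (S (ℓ+1))) :
    cellUL 0 (S 0) ⊆ cellUL ℓ (RS ℓ) ∪ cellUL ℓ T := by
  intro z hz
  rcases mem_cellUL.mp hz with ⟨p, hp, hzp⟩
  obtain ⟨c, hzc, hsub⟩ := cell_subdiv 0 ℓ hzp
  rw [Nat.zero_add] at hzc hsub
  by_cases hc : interior (cellL ℓ c) ∩ cellUL (ℓ + 1) (S (ℓ + 1)) = ∅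
  · left
    apply cellL_subset_cellUL (S := RS ℓ) _ hzc
    rw [hRS ℓ c]
    exact ⟨Set.Subset.trans hsub (cellL_subset_cellUL hp), hc⟩
  · right
    rcases Set.nonempty_iff_ne_empty.mpr hc with ⟨w, hw1, hw2⟩
    rw [← hT] at hw2
    rcases mem_cellUL.mp hw2 with ⟨c'', hc'', hwc''⟩
    have : c'' = c := cell_eq_of_interior_meet hw1 hwc''
    subst this
    exact cellL_subset_cellUL hc'' hzc

/-- `Ω¹ ⊆ int Ω⁰`. -/
lemma omega1_sub_int (hnest : ∀ ℓ, cellUL (ℓ + 1) (S (ℓ + 1)) ⊆ cellUL ℓ (S ℓ))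
    (hbdry : frontier (cellUL 0 (S 0)) ∩ frontier (cellUL 1 (S 1)) = ∅) :
    cellUL 1 (S 1) ⊆ interior (cellUL 0 (S 0)) := by
  intro z hz
  have hz0 : z ∈ cellUL 0 (S 0) := hnest 0 hz
  by_contra hznot
  have hzf : z ∈ frontier (cellUL 0 (S 0)) := by
    rw [(isClosed_cellUL 0 (S 0)).frontier_eq]
    exact ⟨hz0, hznot⟩
  by_cases hzi : z ∈ interior (cellUL 1 (S 1))
  · exact hznot (interior_mono (hnest 0) hzi)
  · have hzf1 : z ∈ frontier (cellUL 1 (S 1)) := by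
      rw [(isClosed_cellUL 1 (S 1)).frontier_eq]
      exact ⟨hz, hzi⟩
    have : z ∈ frontier (cellUL 0 (S 0)) ∩ frontier (cellUL 1 (S 1)) := ⟨hzf, hzf1⟩
    rw [hbdry] at this
    exact this

/-- the key topological lemma: a support avoiding `int Rℓ` but meeting `int Ω⁰`
is contained in `Ωℓ⁺¹`. -/
lemma supp_sub_T {m n : ℕ}
    (hRS : ∀ ℓ (p : ℤ × ℤ), p ∈ RS ℓ ↔ (cellL ℓ p ⊆ cellUL 0 (S 0) ∧
      interior (cellL ℓ p) ∩ cellUL (ℓ + 1) (S (ℓ + 1)) = ∅))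
    (hnest : ∀ ℓ, cellUL (ℓ + 1) (S (ℓ + 1)) ⊆ cellUL ℓ (S ℓ))
    (hbdry : frontier (cellUL 0 (S 0)) ∩ frontier (cellUL 1 (S 1)) = ∅)
    {ℓ : ℕ} {T : Finset (ℤ × ℤ)} (hT : cellUL ℓ T = cellUL (ℓ+1) (S (ℓ+1)))
    {q : ℤ × ℤ}
    (hc1 : suppL m n (ℓ+1) q ∩ interior (cellUL ℓ (RS ℓ)) = ∅)
    (hc2 : (suppL m n (ℓ+1) q ∩ interior (cellUL 0 (S 0))).Nonempty) :
    suppL m n (ℓ+1) q ⊆ cellUL ℓ T := by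
  have hTint : cellUL ℓ T ⊆ interior (cellUL 0 (S 0)) := by
    rw [hT]
    refine Set.Subset.trans ?_ (omega1_sub_int hnest hbdry)
    exact cellUL_chain hnest 1 (ℓ+1) (by omega)
  have hTclosed : IsClosed (cellUL ℓ T) := isClosed_cellUL ℓ T
  have hΩ0closure : cellUL 0 (S 0) ⊆ closure (interior (cellUL 0 (S 0))) :=
    cellUL_sub_closure_interior 0 (S 0)
  obtain ⟨z, hz1, hz2⟩ := hc2
  have hzcl : z ∈ closure (interior (suppL m n (ℓ+1) q)) := by
    rw [closure_interior_suppL]; exact hz1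
  obtain ⟨w, hw1, hw2⟩ := mem_closure_iff.mp hzcl (interior (cellUL 0 (S 0))) isOpen_interior hz2
  have hUsub : interior (suppL m n (ℓ+1) q) ∩ interior (cellUL 0 (S 0)) ⊆ cellUL ℓ T := by
    intro v hv
    obtain ⟨hv1, hv2⟩ := hv
    by_contra hvT
    have hO : IsOpen (interior (suppL m n (ℓ+1) q) ∩ interior (cellUL 0 (S 0)) ∩ (cellUL ℓ T)ᶜ) :=
      (isOpen_interior.inter isOpen_interior).inter hTclosed.isOpen_compl
    have hOR : interior (suppL m n (ℓ+1) q) ∩ interior (cellUL 0 (S 0)) ∩ (cellUL ℓ T)ᶜ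
        ⊆ cellUL ℓ (RS ℓ) := by
      intro v' hv'
      obtain ⟨⟨_, hv'2⟩, hv'T⟩ := hv'
      rcases omega0_sub_R_union_T hRS hT (interior_subset hv'2) with h | h
      · exact h
      · exact absurd h hv'T
    have hOint : interior (suppL m n (ℓ+1) q) ∩ interior (cellUL 0 (S 0)) ∩ (cellUL ℓ T)ᶜ
        ⊆ interior (cellUL ℓ (RS ℓ)) := interior_maximal hOR hO
    have hvint : v ∈ interior (cellUL ℓ (RS ℓ)) := hOint ⟨⟨hv1, hv2⟩, hvT⟩
    have hmem : v ∈ suppL m n (ℓ+1) q ∩ interior (cellUL ℓ (RS ℓ)) := ⟨interior_subset hv1, hvint⟩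
    rw [hc1] at hmem
    exact hmem
  have hfront : ∀ v ∈ interior (suppL m n (ℓ+1) q), v ∉ frontier (cellUL 0 (S 0)) := by
    intro v hv hvf
    have hvf' := hvf
    rw [(isClosed_cellUL 0 (S 0)).frontier_eq] at hvf'
    have hvΩ : v ∈ closure (interior (cellUL 0 (S 0))) := hΩ0closure hvf'.1
    have hvcl : v ∈ closure (interior (suppL m n (ℓ+1) q) ∩ interior (cellUL 0 (S 0))) := by
      rw [mem_closure_iff]
      intro o ho hvo
      obtain ⟨u, hu1, hu2⟩ := mem_closure_iff.mp hvΩ (o ∩ interior (suppL m n (ℓ+1) q))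
        (ho.inter isOpen_interior) ⟨hvo, hv⟩
      exact ⟨u, hu1.1, hu1.2, hu2⟩
    have hvT : v ∈ cellUL ℓ T := by
      have := closure_mono hUsub hvcl
      rwa [hTclosed.closure_eq] at this
    exact hvf'.2 (hTint hvT)
  have hconn : interior (suppL m n (ℓ+1) q) ⊆ interior (cellUL 0 (S 0)) := by
    apply IsPreconnected.subset_left_of_subset_union isOpen_interior
      (isClosed_cellUL 0 (S 0)).isOpen_compl ?_ ?_ ⟨w, hw2, hw1⟩
      (isPreconnected_interior_suppL m n (ℓ+1) q)
    · exact Set.disjoint_left.mpr (fun a ha hac => hac (interior_subset ha))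
    · intro v hv
      by_cases hvΩ : v ∈ cellUL 0 (S 0)
      · left
        by_contra hvi
        exact hfront v hv (by rw [(isClosed_cellUL 0 (S 0)).frontier_eq]; exact ⟨hvΩ, hvi⟩)
      · right; exact hvΩ
  have hintT : interior (suppL m n (ℓ+1) q) ⊆ cellUL ℓ T := fun v hv => hUsub ⟨hv, hconn hv⟩
  calc suppL m n (ℓ+1) q = closure (interior (suppL m n (ℓ+1) q)) := by rw [closure_interior_suppL]
    _ ⊆ closure (cellUL ℓ T) := closure_mono hintT
    _ = cellUL ℓ T := hTclosed.closure_eq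

end Domain

section Comb

lemma mem_hdil {S : Finset (ℤ × ℤ)} {p : ℤ × ℤ} :
    p ∈ hdil S ↔ p ∈ S ∨ (p.1 - 1, p.2) ∈ S := by
  rw [hdil, Finset.mem_union, Finset.mem_image]
  constructor
  · rintro (h | ⟨a, ha, rfl⟩)
    · exact Or.inl h
    · right; simpa using ha
  · rintro (h | h)
    · exact Or.inl h
    · exact Or.inr ⟨(p.1 - 1, p.2), h, by ext <;> simp <;> ring⟩

lemma mem_vdil {S : Finset (ℤ × ℤ)} {p : ℤ × ℤ} :
    p ∈ vdil S ↔ p ∈ S ∨ (p.1, p.2 - 1) ∈ S := by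
  rw [vdil, Finset.mem_union, Finset.mem_image]
  constructor
  · rintro (h | ⟨a, ha, rfl⟩)
    · exact Or.inl h
    · right; simpa using ha
  · rintro (h | h)
    · exact Or.inl h
    · exact Or.inr ⟨(p.1, p.2 - 1), h, by ext <;> simp <;> ring⟩

lemma mem_hdil_iter {k : ℕ} {S : Finset (ℤ × ℤ)} {p : ℤ × ℤ} :
    p ∈ hdil^[k] S ↔ ∃ e : ℤ, 0 ≤ e ∧ e ≤ k ∧ (p.1 - e, p.2) ∈ S := by
  induction k generalizing p with
  | zero =>
    simp only [Function.iterate_zero, id_eq]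
    constructor
    · intro h; exact ⟨0, le_refl _, by norm_num, by simpa using h⟩
    · rintro ⟨e, he0, he1, h⟩
      have : e = 0 := by exact_mod_cast le_antisymm (by exact_mod_cast he1) he0
      subst this; simpa using h
  | succ k ih =>
    rw [Function.iterate_succ_apply', mem_hdil, ih, ih]
    constructor
    · rintro (⟨e, he0, he1, h⟩ | ⟨e, he0, he1, h⟩)
      · exact ⟨e, he0, by push_cast; omega, h⟩
      · exact ⟨e + 1, by omega, by push_cast; omega, by convert h using 2; ring⟩
    · rintro ⟨e, he0, he1, h⟩
      by_cases hek : e ≤ (k:ℤ)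
      · exact Or.inl ⟨e, he0, hek, h⟩
      · right
        refine ⟨e - 1, by omega, by push_cast at he1 ⊢; omega, ?_⟩
        convert h using 2
        ring

lemma mem_vdil_iter {k : ℕ} {S : Finset (ℤ × ℤ)} {p : ℤ × ℤ} :
    p ∈ vdil^[k] S ↔ ∃ e : ℤ, 0 ≤ e ∧ e ≤ k ∧ (p.1, p.2 - e) ∈ S := by
  induction k generalizing p with
  | zero =>
    simp only [Function.iterate_zero, id_eq]
    constructor
    · intro h; exact ⟨0, le_refl _, by norm_num, by simpa using h⟩
    · rintro ⟨e, he0, he1, h⟩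
      have : e = 0 := by exact_mod_cast le_antisymm (by exact_mod_cast he1) he0
      subst this; simpa using h
  | succ k ih =>
    rw [Function.iterate_succ_apply', mem_vdil, ih, ih]
    constructor
    · rintro (⟨e, he0, he1, h⟩ | ⟨e, he0, he1, h⟩)
      · exact ⟨e, he0, by push_cast; omega, h⟩
      · exact ⟨e + 1, by omega, by push_cast; omega, by convert h using 2; ring⟩
    · rintro ⟨e, he0, he1, h⟩
      by_cases hek : e ≤ (k:ℤ)
      · exact Or.inl ⟨e, he0, hek, h⟩
      · right
        refine ⟨e - 1, by omega, by push_cast at he1 ⊢; omega, ?_⟩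
        convert h using 2
        ring

lemma mem_dil {S : Finset (ℤ × ℤ)} {k₁ k₂ : ℕ} {p : ℤ × ℤ} :
    p ∈ dil S k₁ k₂ ↔ ∃ e₁ e₂ : ℤ, 0 ≤ e₁ ∧ e₁ ≤ k₁ ∧ 0 ≤ e₂ ∧ e₂ ≤ k₂ ∧
      (p.1 - e₁, p.2 - e₂) ∈ S := by
  rw [dil, mem_hdil_iter]
  constructor
  · rintro ⟨e₁, he0, he1, h⟩
    rw [mem_vdil_iter] at h
    obtain ⟨e₂, hf0, hf1, h⟩ := h
    exact ⟨e₁, e₂, he0, he1, hf0, hf1, h⟩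
  · rintro ⟨e₁, e₂, he0, he1, hf0, hf1, h⟩
    exact ⟨e₁, he0, he1, mem_vdil_iter.mpr ⟨e₂, hf0, hf1, h⟩⟩

lemma A2_downgrade : ∀ (m : ℕ) {n : ℕ} {C : Finset (ℤ × ℤ)}, A2 m n C → A2 0 n C := by
  intro m
  induction m with
  | zero => intro n C h; exact h
  | succ m ih =>
    intro n C h
    have h' : A2 m n C ∧ A210 (dil C m n) := by simp only [A2] at h; exact h
    exact ih h'.1

lemma A2_rowAdm : ∀ (m : ℕ) {n : ℕ} {C : Finset (ℤ × ℤ)}, A2 m n C →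
    ∀ k₁ : ℕ, k₁ < m → rowAdmissible (dil C k₁ n) := by
  intro m
  induction m with
  | zero => intro n C _ k₁ hk; omega
  | succ m ih =>
    intro n C h k₁ hk
    have h' : A2 m n C ∧ A210 (dil C m n) := by simp only [A2] at h; exact h
    rcases Nat.lt_or_ge k₁ m with h1 | h1
    · exact ih h'.1 k₁ h1
    · have : k₁ = m := by omega
      subst this
      exact h'.2.2

lemma A2_colAdm : ∀ (n : ℕ) {C : Finset (ℤ × ℤ)}, A2 0 n C →
    ∀ k₂ : ℕ, k₂ < n → colAdmissible (dil C 0 k₂) := by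
  intro n
  induction n with
  | zero => intro C _ k₂ hk; omega
  | succ n ih =>
    intro C h k₂ hk
    have h' : A2 0 n C ∧ A201 (dil C 0 n) := by simp only [A2] at h; exact h
    rcases Nat.lt_or_ge k₂ n with h1 | h1
    · exact ih h'.1 k₂ h1
    · have : k₂ = n := by omega
      subst this
      exact h'.2.2

/-- being blocked in a window of `nn+1` vertically consecutive cells. -/
def BlP (C : Finset (ℤ × ℤ)) (nn : ℕ) (i t : ℤ) : Prop :=
  ∃ d : ℤ, 0 ≤ d ∧ d ≤ (nn:ℤ) ∧ (i, t + d) ∈ C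

lemma blp_mem_dil {C : Finset (ℤ × ℤ)} {n : ℕ} {k₁ : ℕ} {i t : ℤ} {e₁ : ℤ}
    (he0 : 0 ≤ e₁) (he1 : e₁ ≤ (k₁:ℤ)) (h : BlP C n i t) :
    (i + e₁, t + n) ∈ dil C k₁ n := by
  obtain ⟨d, hd0, hd1, hd⟩ := h
  rw [mem_dil]
  exact ⟨e₁, (n:ℤ) - d, he0, he1, by omega, by omega, by
    have : (i + e₁ - e₁, t + (n:ℤ) - ((n:ℤ) - d)) = (i, t + d) := by ext <;> simp <;> ring
    rw [this]; exact hd⟩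

lemma mem_dil_blp {C : Finset (ℤ × ℤ)} {n : ℕ} {k₁ : ℕ} {c j : ℤ}
    (h : (c, j + n) ∈ dil C k₁ n) :
    ∃ e₁ : ℤ, 0 ≤ e₁ ∧ e₁ ≤ (k₁:ℤ) ∧ BlP C n (c - e₁) j := by
  rw [mem_dil] at h
  obtain ⟨e₁, e₂, h1, h2, h3, h4, h⟩ := h
  exact ⟨e₁, h1, h2, ⟨(n:ℤ) - e₂, by omega, by omega, by
    have : (c - e₁, j + ((n:ℤ) - e₂)) = (c - e₁, j + (n:ℤ) - e₂) := by ext <;> simp <;> ring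
    rw [this]; exact h⟩⟩

end Comb

section Gaps

variable {C : Finset (ℤ × ℤ)} {m n : ℕ}

/-- horizontal gap lemma for window-blocking, single window row. -/
lemma rowgap (hadm : ∀ k₁ : ℕ, k₁ < m → rowAdmissible (dil C k₁ n)) (hm : 1 ≤ m)
    {t x y : ℤ} (hbx : BlP C n x t) (hby : BlP C n y t) (hxy : x < y)
    (hfree : ∀ c, x < c → c < y → ¬ BlP C n c t) :
    y = x + 1 ∨ (m:ℤ) < y - x - 1 := by
  by_contra hcon
  push_neg at hcon
  obtain ⟨hne, hle⟩ := hcon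
  set g : ℤ := y - x - 1 with hg
  have hg1 : 1 ≤ g := by omega
  have hgm : g ≤ (m:ℤ) := hle
  set k₁ : ℕ := (g - 1).toNat with hk₁
  have hk₁' : (k₁:ℤ) = g - 1 := by omega
  have hklt : k₁ < m := by omega
  have hAdm := (hadm k₁ hklt (t + n)).1
  have hmem1 : (x + k₁, t + n) ∈ dil C k₁ n := blp_mem_dil (by omega) (by omega) hbx
  have hmem2 : (y, t + n) ∈ dil C k₁ n := by
    have := blp_mem_dil (k₁ := k₁) (le_refl 0) (by omega) hby
    simpa using this
  have hbet : ∀ c : ℤ, x + k₁ < c → c < y → c ∉ row (dil C k₁ n) (t + n) := by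
    intro c hc1 hc2 hc
    obtain ⟨e₁, he0, he1, hb⟩ := mem_dil_blp hc
    exact hfree (c - e₁) (by omega) (by omega) hb
  have := hAdm (x + k₁) y hmem1 hmem2 (by omega) hbet
  omega

/-- horizontal gap lemma across two consecutive window rows. -/
lemma siggap (hadm : ∀ k₁ : ℕ, k₁ < m → rowAdmissible (dil C k₁ n)) (hm : 1 ≤ m)
    {t x y tx ty : ℤ} (htx : tx = t ∨ tx = t + 1) (hty : ty = t ∨ ty = t + 1)
    (hbx : BlP C n x tx) (hby : BlP C n y ty) (hxy : x < y)
    (hfree0 : ∀ c, x < c → c < y → ¬ BlP C n c t)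
    (hfree1 : ∀ c, x < c → c < y → ¬ BlP C n c (t+1)) :
    y = x + 1 ∨ (m:ℤ) < y - x - 1 := by
  by_contra hcon
  push_neg at hcon
  obtain ⟨hne, hle⟩ := hcon
  set g : ℤ := y - x - 1 with hg
  have hg1 : 1 ≤ g := by omega
  set k₁ : ℕ := (g - 1).toNat with hk₁
  have hk₁' : (k₁:ℤ) = g - 1 := by omega
  have hklt : k₁ < m := by omega
  have hAdm := (hadm k₁ hklt (t + n)).2
  have hmemx : (x + k₁) ∈ row (dil C k₁ n) (t + n) ∪ row (dil C k₁ n) (t + n + 1) := by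
    rcases htx with h | h
    · subst h; exact Set.mem_union_left _ (blp_mem_dil (by omega) (by omega) hbx)
    · subst h
      right
      have := blp_mem_dil (k₁ := k₁) (by omega : (0:ℤ) ≤ (k₁:ℤ)) (le_refl _) hbx
      have heq : t + 1 + (n:ℤ) = t + n + 1 := by ring
      rwa [heq] at this
  have hmemy : y ∈ row (dil C k₁ n) (t + n) ∪ row (dil C k₁ n) (t + n + 1) := by
    rcases hty with h | h
    · subst h
      left
      have := blp_mem_dil (k₁ := k₁) (le_refl 0) (by omega) hby
      simpa [row] using this
    · subst h
      right
      have := blp_mem_dil (k₁ := k₁) (le_refl 0) (by omega) hby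
      have heq : t + 1 + (n:ℤ) = t + n + 1 := by ring
      rw [heq] at this
      simpa [row] using this
  have hbet : ∀ c : ℤ, x + k₁ < c → c < y →
      c ∉ row (dil C k₁ n) (t + n) ∪ row (dil C k₁ n) (t + n + 1) := by
    intro c hc1 hc2 hc
    rcases hc with hc | hc
    · obtain ⟨e₁, he0, he1, hb⟩ := mem_dil_blp hc
      exact hfree0 (c - e₁) (by omega) (by omega) hb
    · have hc' : (c, (t+1) + (n:ℤ)) ∈ dil C k₁ n := by
        have heq : t + 1 + (n:ℤ) = t + n + 1 := by ring
        rwa [heq]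
      obtain ⟨e₁, he0, he1, hb⟩ := mem_dil_blp hc'
      exact hfree1 (c - e₁) (by omega) (by omega) hb
  have := hAdm (x + k₁) y hmemx hmemy (by omega) hbet
  omega

/-- vertical gap lemma for a single column. -/
lemma colgap (hadm : ∀ k₂ : ℕ, k₂ < n → colAdmissible (dil C 0 k₂)) (hn : 1 ≤ n)
    {i x y : ℤ} (hx : (i, x) ∈ C) (hy : (i, y) ∈ C) (hxy : x < y)
    (hfree : ∀ c, x < c → c < y → (i, c) ∉ C) :
    y = x + 1 ∨ (n:ℤ) < y - x - 1 := by
  by_contra hcon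
  push_neg at hcon
  obtain ⟨hne, hle⟩ := hcon
  set g : ℤ := y - x - 1 with hg
  have hg1 : 1 ≤ g := by omega
  set k₂ : ℕ := (g - 1).toNat with hk₂
  have hk₂' : (k₂:ℤ) = g - 1 := by omega
  have hklt : k₂ < n := by omega
  have hAdm := (hadm k₂ hklt i).1
  have hmem1 : (i, x + k₂) ∈ dil C 0 k₂ := by
    rw [mem_dil]
    exact ⟨0, k₂, le_refl _, le_refl _, by omega, le_refl _, by simpa using hx⟩
  have hmem2 : (i, y) ∈ dil C 0 k₂ := by
    rw [mem_dil]
    exact ⟨0, 0, le_refl _, le_refl _, le_refl _, by omega, by simpa using hy⟩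
  have hbet : ∀ c : ℤ, x + k₂ < c → c < y → c ∉ col (dil C 0 k₂) i := by
    intro c hc1 hc2 hc
    rw [col, Set.mem_setOf_eq, mem_dil] at hc
    obtain ⟨e₁, e₂, h1, h2, h3, h4, h⟩ := hc
    have he1 : e₁ = 0 := by omega
    subst he1
    exact hfree (c - e₂) (by omega) (by omega) (by simpa using h)
  have := hAdm (x + k₂) y hmem1 hmem2 (by omega) hbet
  omega

/-- vertical gap lemma for a pair of adjacent columns. -/
lemma colsiggap (hadm : ∀ k₂ : ℕ, k₂ < n → colAdmissible (dil C 0 k₂)) (hn : 1 ≤ n)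
    {i x y ix iy : ℤ} (hix : ix = i ∨ ix = i + 1) (hiy : iy = i ∨ iy = i + 1)
    (hx : (ix, x) ∈ C) (hy : (iy, y) ∈ C) (hxy : x < y)
    (hfree0 : ∀ c, x < c → c < y → (i, c) ∉ C)
    (hfree1 : ∀ c, x < c → c < y → (i + 1, c) ∉ C) :
    y = x + 1 ∨ (n:ℤ) < y - x - 1 := by
  by_contra hcon
  push_neg at hcon
  obtain ⟨hne, hle⟩ := hcon
  set g : ℤ := y - x - 1 with hg
  have hg1 : 1 ≤ g := by omega
  set k₂ : ℕ := (g - 1).toNat with hk₂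
  have hk₂' : (k₂:ℤ) = g - 1 := by omega
  have hklt : k₂ < n := by omega
  have hAdm := (hadm k₂ hklt i).2
  have hmemx : (x + k₂) ∈ col (dil C 0 k₂) i ∪ col (dil C 0 k₂) (i+1) := by
    have hmem : (ix, x + k₂) ∈ dil C 0 k₂ := by
      rw [mem_dil]
      exact ⟨0, k₂, le_refl _, le_refl _, by omega, le_refl _, by simpa using hx⟩
    rcases hix with h | h
    · subst h; exact Set.mem_union_left _ hmem
    · subst h; exact Set.mem_union_right _ hmem
  have hmemy : y ∈ col (dil C 0 k₂) i ∪ col (dil C 0 k₂) (i+1) := by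
    have hmem : (iy, y) ∈ dil C 0 k₂ := by
      rw [mem_dil]
      exact ⟨0, 0, le_refl _, le_refl _, le_refl _, by omega, by simpa using hy⟩
    rcases hiy with h | h
    · subst h; exact Set.mem_union_left _ hmem
    · subst h; exact Set.mem_union_right _ hmem
  have hbet : ∀ c : ℤ, x + k₂ < c → c < y →
      c ∉ col (dil C 0 k₂) i ∪ col (dil C 0 k₂) (i+1) := by
    intro c hc1 hc2 hc
    have hgen : ∀ i' : ℤ, (i', c) ∈ dil C 0 k₂ → (∀ c', x < c' → c' < y → (i', c') ∉ C) → False := by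
      intro i' hmem hfr
      rw [mem_dil] at hmem
      obtain ⟨e₁, e₂, h1, h2, h3, h4, h⟩ := hmem
      have he1 : e₁ = 0 := by omega
      subst he1
      exact hfr (c - e₂) (by omega) (by omega) (by simpa using h)
    rcases hc with hc | hc
    · exact hgen i hc hfree0
    · exact hgen (i+1) hc hfree1
  have := hAdm (x + k₂) y hmemx hmemy (by omega) hbet
  omega

/-- the abstract 1D window-selection lemma. -/
lemma lem1d (d : ℕ) (P : ℤ → Prop) (F : Finset ℤ) (hPF : ∀ s, P s → s ∈ F)
    (lo hi : ℤ) (hlohi : lo ≤ hi) (hspan : hi ≤ lo + d)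
    (hfree : ∀ s, lo ≤ s → s ≤ hi → ¬ P s)
    (hGAP : ∀ x y, P x → P y → x < y → (∀ c, x < c → c < y → ¬ P c) →
      y = x + 1 ∨ (d:ℤ) < y - x - 1) :
    ∃ t : ℤ, hi - d ≤ t ∧ t ≤ lo ∧ ∀ s, t ≤ s → s ≤ t + d → ¬ P s := by
  classical
  set Fset : Finset ℤ := (Finset.Icc (hi - d) lo).filter (fun s => P (s-1)) with hFset
  by_cases hne : Fset.Nonempty
  · set u : ℤ := Fset.max' hne with hu
    have humem : u ∈ Fset := Fset.max'_mem hne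
    rw [hFset, Finset.mem_filter, Finset.mem_Icc] at humem
    obtain ⟨⟨hu1, hu2⟩, hu3⟩ := humem
    have hfree_u_lo : ∀ s, u ≤ s → s ≤ hi → ¬ P s := by
      intro s hs1 hs2 hP
      rcases le_or_gt lo s with h | h
      · exact hfree s h hs2 hP
      · have hmem : s + 1 ∈ Fset := by
          rw [hFset, Finset.mem_filter, Finset.mem_Icc]
          exact ⟨⟨by omega, by omega⟩, by simpa using hP⟩
        have := Fset.le_max' (s+1) hmem
        rw [← hu] at this
        omega
    refine ⟨u, hu1, hu2, ?_⟩
    intro s hs1 hs2 hP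
    rcases le_or_gt s hi with h | h
    · exact hfree_u_lo s hs1 h hP
    · -- there is a blocked cell in (hi, u + d]; take the least one
      have hF2ne : ((Finset.Icc (hi + 1) (u + (d:ℤ))).filter P).Nonempty :=
        ⟨s, by rw [Finset.mem_filter, Finset.mem_Icc]; exact ⟨⟨by omega, by omega⟩, hP⟩⟩
      obtain ⟨hvIcc, hv3⟩ := Finset.mem_filter.mp (Finset.min'_mem _ hF2ne)
      rw [Finset.mem_Icc] at hvIcc
      obtain ⟨hv1, hv2⟩ := hvIcc
      have hgap := hGAP (u - 1) (((Finset.Icc (hi + 1) (u + (d:ℤ))).filter P).min' hF2ne)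
        (by simpa using hu3) hv3 (by omega) ?_
      · omega
      · intro c hc1 hc2 hPc
        rcases le_or_gt c hi with h' | h'
        · exact hfree_u_lo c (by omega) h' hPc
        · have hmem : c ∈ (Finset.Icc (hi + 1) (u + (d:ℤ))).filter P := by
            rw [Finset.mem_filter, Finset.mem_Icc]
            exact ⟨⟨by omega, by omega⟩, hPc⟩
          have := Finset.min'_le _ c hmem
          omega
  · refine ⟨hi - d, le_refl _, by omega, ?_⟩
    intro s hs1 hs2 hP
    rcases le_or_gt lo s with h | h
    · exact hfree s h (by omega) hP
    · apply hne
      exact ⟨s + 1, by rw [hFset, Finset.mem_filter, Finset.mem_Icc]; exact ⟨⟨by omega, by omega⟩, by simpa using hP⟩⟩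

end Gaps

section EXT

variable {C : Finset (ℤ × ℤ)} {m n : ℕ}

lemma blp_neg {i t : ℤ} : (¬ BlP C n i t) ↔ ∀ d : ℤ, 0 ≤ d → d ≤ (n:ℤ) → (i, t+d) ∉ C := by
  constructor
  · intro h d h1 h2 hmem
    exact h ⟨d, h1, h2, hmem⟩
  · rintro h ⟨d, h1, h2, hmem⟩
    exact h d h1 h2 hmem

/-- one step of the corridor propagation. -/
lemma corridor_step (hrow : ∀ k₁ : ℕ, k₁ < m → rowAdmissible (dil C k₁ n)) (hm : 1 ≤ m)
    {i0 i1 : ℤ} (hspan2 : i1 - i0 ≤ (m:ℤ))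
    {i : ℤ} (hi0 : i0 ≤ i) (hi1 : i + 1 ≤ i1)
    {s s' : ℤ} (hss' : s' = s + 1 ∨ s = s' + 1)
    (hLFs : ∀ x, i0 ≤ x → x ≤ i + 1 → ¬ BlP C n x s)
    (hbot : ¬ BlP C n (i+1) s')
    (hexs : ∃ w, i0 ≤ w ∧ w ≤ i1 ∧ BlP C n w s) :
    ∀ x, i0 ≤ x → x ≤ i + 1 → ¬ BlP C n x s' := by
  classical
  intro x hx1 hx2 hxB
  -- maximal blocked column in [i0, i+1] at the new row s'
  have hFbne : ((Finset.Icc i0 (i+1)).filter (fun c => BlP C n c s')).Nonempty :=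
    ⟨x, by rw [Finset.mem_filter, Finset.mem_Icc]; exact ⟨⟨hx1, hx2⟩, hxB⟩⟩
  obtain ⟨hyIcc, hy3⟩ := Finset.mem_filter.mp (Finset.max'_mem _ hFbne)
  rw [Finset.mem_Icc] at hyIcc
  set y : ℤ := ((Finset.Icc i0 (i+1)).filter (fun c => BlP C n c s')).max' hFbne with hy
  have hymax : ∀ c, y < c → c ≤ i + 1 → ¬ BlP C n c s' := by
    intro c hc1 hc2 hcB
    have : c ∈ (Finset.Icc i0 (i+1)).filter (fun c => BlP C n c s') := by
      rw [Finset.mem_filter, Finset.mem_Icc]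
      exact ⟨⟨by omega, hc2⟩, hcB⟩
    have := Finset.le_max' _ c this
    omega
  have hyne : y ≤ i := by
    rcases eq_or_lt_of_le hyIcc.2 with h | h
    · exact absurd (h ▸ hy3) hbot
    · omega
  -- minimal blocked column in [i0, i1] at the old row s
  obtain ⟨w, hw1, hw2, hw3⟩ := hexs
  have hFsne : ((Finset.Icc i0 i1).filter (fun c => BlP C n c s)).Nonempty :=
    ⟨w, by rw [Finset.mem_filter, Finset.mem_Icc]; exact ⟨⟨hw1, hw2⟩, hw3⟩⟩
  obtain ⟨hxsIcc, hxs3⟩ := Finset.mem_filter.mp (Finset.min'_mem _ hFsne)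
  rw [Finset.mem_Icc] at hxsIcc
  set xs : ℤ := ((Finset.Icc i0 i1).filter (fun c => BlP C n c s)).min' hFsne with hxs
  have hxsmin : ∀ c, i0 ≤ c → c < xs → ¬ BlP C n c s := by
    intro c hc1 hc2 hcB
    have : c ∈ (Finset.Icc i0 i1).filter (fun c => BlP C n c s) := by
      rw [Finset.mem_filter, Finset.mem_Icc]
      exact ⟨⟨hc1, by omega⟩, hcB⟩
    have := Finset.min'_le _ c this
    omega
  have hxsgt : i + 1 < xs := by
    by_contra hcon
    exact hLFs xs hxsIcc.1 (by omega) hxs3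
  -- no blocked column beyond i+1 at the new row s'
  have hnoz : ∀ c, i + 1 < c → c ≤ i1 → ¬ BlP C n c s' := by
    intro c hc1 hc2 hcB
    have hF3ne : ((Finset.Icc (i+2) i1).filter (fun c => BlP C n c s')).Nonempty :=
      ⟨c, by rw [Finset.mem_filter, Finset.mem_Icc]; exact ⟨⟨by omega, hc2⟩, hcB⟩⟩
    obtain ⟨hzIcc, hz3⟩ := Finset.mem_filter.mp (Finset.min'_mem _ hF3ne)
    rw [Finset.mem_Icc] at hzIcc
    set zm : ℤ := ((Finset.Icc (i+2) i1).filter (fun c => BlP C n c s')).min' hF3ne with hzm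
    have hzmin : ∀ c', i + 2 ≤ c' → c' < zm → ¬ BlP C n c' s' := by
      intro c' h1 h2 hB
      have : c' ∈ (Finset.Icc (i+2) i1).filter (fun c => BlP C n c s') := by
        rw [Finset.mem_filter, Finset.mem_Icc]
        exact ⟨⟨h1, by omega⟩, hB⟩
      have := Finset.min'_le _ c' this
      omega
    have hfr : ∀ c', y < c' → c' < zm → ¬ BlP C n c' s' := by
      intro c' h1 h2
      rcases le_or_gt c' (i+1) with h | h
      · exact hymax c' h1 h
      · exact hzmin c' (by omega) h2
    have := rowgap hrow hm hy3 hz3 (by omega) hfr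
    omega
  -- free strips between y and xs on both rows
  have hfree_s : ∀ c, y < c → c < xs → ¬ BlP C n c s := by
    intro c h1 h2
    rcases le_or_gt c (i+1) with h | h
    · exact hLFs c (by omega) h
    · exact hxsmin c (by omega) h2
  have hfree_s' : ∀ c, y < c → c < xs → ¬ BlP C n c s' := by
    intro c h1 h2
    rcases le_or_gt c (i+1) with h | h
    · exact hymax c h1 h
    · exact hnoz c h (by omega)
  -- conclude with the sigma gap lemma
  rcases hss' with h | h
  · have := siggap hrow hm (t := s) (Or.inr h) (Or.inl rfl) hy3 hxs3 (by omega)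
      hfree_s (by rw [← h]; exact hfree_s')
    omega
  · have := siggap hrow hm (t := s') (Or.inl rfl) (Or.inr h) hy3 hxs3 (by omega)
      hfree_s' (by rw [← h]; exact hfree_s)
    omega

/-- the combinatorial extension lemma: under `A²_{m,n}` of `C`, a free half-size block
extends to a free full-size aligned block. -/
lemma EXT (hm : 1 ≤ m) (hn : 1 ≤ n) (hA2 : A2 m n C) (a b : ℤ)
    (hfree : ∀ i j : ℤ, a ≤ 2*i+1 → 2*i ≤ a+m → b ≤ 2*j+1 → 2*j ≤ b+n → (i,j) ∉ C) :
    ∃ a' b' : ℤ, 2*a' ≤ a ∧ a ≤ 2*a'+m+1 ∧ 2*b' ≤ b ∧ b ≤ 2*b'+n+1 ∧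
      ∀ i j : ℤ, a' ≤ i → i ≤ a'+m → b' ≤ j → j ≤ b'+n → (i,j) ∉ C := by
  classical
  have hrow : ∀ k₁ : ℕ, k₁ < m → rowAdmissible (dil C k₁ n) := A2_rowAdm m hA2
  have hcol : ∀ k₂ : ℕ, k₂ < n → colAdmissible (dil C 0 k₂) := A2_colAdm n (A2_downgrade m hA2)
  obtain ⟨i0, hi0⟩ : ∃ i0 : ℤ, 2*i0 ≤ a ∧ a ≤ 2*i0 + 1 := by
    rcases Int.even_or_odd a with ⟨c, hc⟩ | ⟨c, hc⟩
    · exact ⟨c, by omega⟩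
    · exact ⟨c, by omega⟩
  obtain ⟨i1, hi1⟩ : ∃ i1 : ℤ, 2*i1 ≤ a + m ∧ a + m ≤ 2*i1 + 1 := by
    rcases Int.even_or_odd (a + m) with ⟨c, hc⟩ | ⟨c, hc⟩
    · exact ⟨c, by omega⟩
    · exact ⟨c, by omega⟩
  obtain ⟨j0, hj0⟩ : ∃ j0 : ℤ, 2*j0 ≤ b ∧ b ≤ 2*j0 + 1 := by
    rcases Int.even_or_odd b with ⟨c, hc⟩ | ⟨c, hc⟩
    · exact ⟨c, by omega⟩
    · exact ⟨c, by omega⟩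
  obtain ⟨j1, hj1⟩ : ∃ j1 : ℤ, 2*j1 ≤ b + n ∧ b + n ≤ 2*j1 + 1 := by
    rcases Int.even_or_odd (b + n) with ⟨c, hc⟩ | ⟨c, hc⟩
    · exact ⟨c, by omega⟩
    · exact ⟨c, by omega⟩
  have hii : i0 ≤ i1 := by omega
  have hspanI : i1 ≤ i0 + (m:ℤ) := by omega
  have hspan2 : i1 - i0 ≤ (m:ℤ) := by omega
  have hjj : j0 ≤ j1 := by omega
  have hspanJ : j1 ≤ j0 + (n:ℤ) := by omega
  have hfreeIJ : ∀ i s : ℤ, i0 ≤ i → i ≤ i1 → j0 ≤ s → s ≤ j1 → (i, s) ∉ C := by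
    intro i s h1 h2 h3 h4
    exact hfree i s (by omega) (by omega) (by omega) (by omega)
  -- column window selection, single columns and pairs
  have hGsingle : ∀ i, i0 ≤ i → i ≤ i1 →
      ∃ t, j1 - n ≤ t ∧ t ≤ j0 ∧ ¬ BlP C n i t := by
    intro i h1 h2
    obtain ⟨t, ht1, ht2, ht3⟩ := lem1d n (fun s => (i, s) ∈ C) (C.image Prod.snd)
      (fun s hs => Finset.mem_image.mpr ⟨(i,s), hs, rfl⟩) j0 j1 hjj hspanJ
      (fun s hs1 hs2 => hfreeIJ i s h1 h2 hs1 hs2)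
      (fun x y hx hy hxy hf => colgap hcol hn hx hy hxy hf)
    exact ⟨t, ht1, ht2, blp_neg.mpr (fun d hd1 hd2 => ht3 (t+d) (by omega) (by omega))⟩
  have hGpair : ∀ i, i0 ≤ i → i + 1 ≤ i1 →
      ∃ t, j1 - n ≤ t ∧ t ≤ j0 ∧ ¬ BlP C n i t ∧ ¬ BlP C n (i+1) t := by
    intro i h1 h2
    obtain ⟨t, ht1, ht2, ht3⟩ := lem1d n (fun s => (i, s) ∈ C ∨ (i+1, s) ∈ C) (C.image Prod.snd)
      (fun s hs => by
        rcases hs with hs | hs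
        · exact Finset.mem_image.mpr ⟨(i,s), hs, rfl⟩
        · exact Finset.mem_image.mpr ⟨(i+1,s), hs, rfl⟩) j0 j1 hjj hspanJ
      (fun s hs1 hs2 hP => by
        rcases hP with hs | hs
        · exact hfreeIJ i s h1 (by omega) hs1 hs2 hs
        · exact hfreeIJ (i+1) s (by omega) h2 hs1 hs2 hs)
      (fun x y hx hy hxy hf => by
        have hf0 : ∀ c, x < c → c < y → (i, c) ∉ C := fun c h1 h2 hc => hf c h1 h2 (Or.inl hc)
        have hf1 : ∀ c, x < c → c < y → (i+1, c) ∉ C := fun c h1 h2 hc => hf c h1 h2 (Or.inr hc)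
        rcases hx with hx | hx
        · rcases hy with hy | hy
          · exact colsiggap hcol hn (Or.inl rfl) (Or.inl rfl) hx hy hxy hf0 hf1
          · exact colsiggap hcol hn (Or.inl rfl) (Or.inr rfl) hx hy hxy hf0 hf1
        · rcases hy with hy | hy
          · exact colsiggap hcol hn (Or.inr rfl) (Or.inl rfl) hx hy hxy hf0 hf1
          · exact colsiggap hcol hn (Or.inr rfl) (Or.inr rfl) hx hy hxy hf0 hf1)
    refine ⟨t, ht1, ht2,
      blp_neg.mpr (fun d hd1 hd2 hmem => ht3 (t+d) (by omega) (by omega) (Or.inl hmem)),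
      blp_neg.mpr (fun d hd1 hd2 hmem => ht3 (t+d) (by omega) (by omega) (Or.inr hmem))⟩
  -- G-interval property
  have hGint : ∀ i t t' s : ℤ, (j1 - n ≤ t ∧ t ≤ j0 ∧ ¬ BlP C n i t) →
      (j1 - n ≤ t' ∧ t' ≤ j0 ∧ ¬ BlP C n i t') → t ≤ s → s ≤ t' →
      (j1 - n ≤ s ∧ s ≤ j0 ∧ ¬ BlP C n i s) := by
    intro i t t' s ⟨ht1, ht2, ht3⟩ ⟨ht1', ht2', ht3'⟩ hs1 hs2
    refine ⟨by omega, by omega, blp_neg.mpr ?_⟩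
    intro d hd1 hd2 hmem
    rcases le_or_gt (s + d) (t + n) with h | h
    · exact blp_neg.mp ht3 (s + d - t) (by omega) (by omega)
        (by rw [show t + (s + d - t) = s + d by ring]; exact hmem)
    · exact blp_neg.mp ht3' (s + d - t') (by omega) (by omega)
        (by rw [show t' + (s + d - t') = s + d by ring]; exact hmem)
  by_cases hex : ∃ t, j1 - n ≤ t ∧ t ≤ j0 ∧ ∀ i, i0 ≤ i → i ≤ i1 → ¬ BlP C n i t
  · -- horizontal extension at the common free window
    obtain ⟨t, ht1, ht2, ht3⟩ := hex
    obtain ⟨a', ha1, ha2, ha3⟩ := lem1d m (fun x => BlP C n x t) (C.image Prod.fst)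
      (fun x hx => by
        obtain ⟨d, _, _, hmem⟩ := hx
        exact Finset.mem_image.mpr ⟨(x, t+d), hmem, rfl⟩) i0 i1 hii hspanI
      (fun x h1 h2 => ht3 x h1 h2)
      (fun x y hx hy hxy hf => rowgap hrow hm hx hy hxy hf)
    refine ⟨a', t, by omega, by omega, by omega, by omega, ?_⟩
    intro i j h1 h2 h3 h4 hmem
    exact ha3 i h1 h2 ⟨j - t, by omega, by omega,
      by rw [show t + (j - t) = j by ring]; exact hmem⟩
  · exfalso
    push_neg at hex
    -- the corridor contradiction
    have CLAIM : ∀ i : ℤ, i0 ≤ i → i ≤ i1 →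
        ∀ t, (j1 - n ≤ t ∧ t ≤ j0 ∧ ¬ BlP C n i t) →
        ∀ x, i0 ≤ x → x ≤ i → ¬ BlP C n x t := by
      have base : i0 ≤ i1 → ∀ t, (j1 - n ≤ t ∧ t ≤ j0 ∧ ¬ BlP C n i0 t) →
          ∀ x, i0 ≤ x → x ≤ i0 → ¬ BlP C n x t := by
        intro _ t ht x hx1 hx2
        have hxx : x = i0 := by omega
        subst hxx
        exact ht.2.2
      have step : ∀ i : ℤ, i0 ≤ i →
          (i ≤ i1 → ∀ t, (j1 - n ≤ t ∧ t ≤ j0 ∧ ¬ BlP C n i t) →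
            ∀ x, i0 ≤ x → x ≤ i → ¬ BlP C n x t) →
          (i + 1 ≤ i1 → ∀ t, (j1 - n ≤ t ∧ t ≤ j0 ∧ ¬ BlP C n (i+1) t) →
            ∀ x, i0 ≤ x → x ≤ i + 1 → ¬ BlP C n x t) := by
        intro i hi ih hi1 t ht
        obtain ⟨t0, ht01, ht02, ht03, ht04⟩ := hGpair i hi (by omega)
        have hLF0 : ∀ x, i0 ≤ x → x ≤ i + 1 → ¬ BlP C n x t0 := by
          intro x hx1 hx2
          rcases le_or_gt x i with h | h
          · exact ih (by omega) t0 ⟨ht01, ht02, ht03⟩ x hx1 h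
          · have hxx : x = i + 1 := by omega
            subst hxx
            exact ht04
        have hGt0 : j1 - n ≤ t0 ∧ t0 ≤ j0 ∧ ¬ BlP C n (i+1) t0 := ⟨ht01, ht02, ht04⟩
        have hGt : j1 - n ≤ t ∧ t ≤ j0 ∧ ¬ BlP C n (i+1) t := ht
        rcases le_or_gt t0 t with hdir | hdir
        · have hup : ∀ s : ℤ, t0 ≤ s → s ≤ t →
              (∀ x, i0 ≤ x → x ≤ i + 1 → ¬ BlP C n x s) := by
            have stepU : ∀ s : ℤ, t0 ≤ s →
                (s ≤ t → ∀ x, i0 ≤ x → x ≤ i + 1 → ¬ BlP C n x s) →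
                (s + 1 ≤ t → ∀ x, i0 ≤ x → x ≤ i + 1 → ¬ BlP C n x (s+1)) := by
              intro s hs0 ihs hst
              have hGs : j1 - n ≤ s ∧ s ≤ j0 ∧ ¬ BlP C n (i+1) s :=
                hGint (i+1) t0 t s hGt0 hGt hs0 (by omega)
              have hGs1 : j1 - n ≤ s + 1 ∧ s + 1 ≤ j0 ∧ ¬ BlP C n (i+1) (s+1) :=
                hGint (i+1) t0 t (s+1) hGt0 hGt (by omega) hst
              exact corridor_step hrow hm hspan2 hi hi1 (Or.inl rfl) (ihs (by omega)) hGs1.2.2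
                (hex s hGs.1 hGs.2.1)
            exact Int.le_induction (motive := fun s _ => s ≤ t →
              ∀ x, i0 ≤ x → x ≤ i + 1 → ¬ BlP C n x s) (fun _ => hLF0) stepU
          exact hup t hdir (le_refl t)
        · have hdown : ∀ s : ℤ, s ≤ t0 → t ≤ s →
              (∀ x, i0 ≤ x → x ≤ i + 1 → ¬ BlP C n x s) := by
            have stepD : ∀ s : ℤ, s ≤ t0 →
                (t ≤ s → ∀ x, i0 ≤ x → x ≤ i + 1 → ¬ BlP C n x s) →
                (t ≤ s - 1 → ∀ x, i0 ≤ x → x ≤ i + 1 → ¬ BlP C n x (s-1)) := by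
              intro s hs0 ihs hst
              have hGs : j1 - n ≤ s ∧ s ≤ j0 ∧ ¬ BlP C n (i+1) s :=
                hGint (i+1) t t0 s hGt hGt0 (by omega) hs0
              have hGs1 : j1 - n ≤ s - 1 ∧ s - 1 ≤ j0 ∧ ¬ BlP C n (i+1) (s-1) :=
                hGint (i+1) t t0 (s-1) hGt hGt0 hst (by omega)
              exact corridor_step hrow hm hspan2 hi hi1 (Or.inr (by ring)) (ihs (by omega)) hGs1.2.2
                (hex s hGs.1 hGs.2.1)
            exact Int.le_induction_down (motive := fun s _ => t ≤ s →
              ∀ x, i0 ≤ x → x ≤ i + 1 → ¬ BlP C n x s) (fun _ => hLF0) stepD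
          exact hdown t (by omega) (le_refl t)
      exact fun i hi => Int.le_induction (motive := fun i _ => i ≤ i1 →
        ∀ t, (j1 - n ≤ t ∧ t ≤ j0 ∧ ¬ BlP C n i t) →
        ∀ x, i0 ≤ x → x ≤ i → ¬ BlP C n x t) base step i hi
    obtain ⟨t1, ht11, ht12, ht13⟩ := hGsingle i1 hii (le_refl i1)
    obtain ⟨w, hw1, hw2, hw3⟩ := hex t1 ht11 ht12
    exact CLAIM i1 hii (le_refl i1) t1 ⟨ht11, ht12, ht13⟩ w hw1 hw2 hw3

end EXT

section GeoMain

lemma cross_le (ℓ : ℕ) (x y : ℝ) : x/2^ℓ ≤ y/2^(ℓ+1) ↔ 2*x ≤ y := by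
  rw [pow_succ, div_le_div_iff₀ (pow2pos ℓ) (by positivity)]
  constructor
  · intro h; nlinarith [pow2pos ℓ]
  · intro h; nlinarith [pow2pos ℓ]

lemma cross_le' (ℓ : ℕ) (x y : ℝ) : y/2^(ℓ+1) ≤ x/2^ℓ ↔ y ≤ 2*x := by
  rw [pow_succ, div_le_div_iff₀ (by positivity) (pow2pos ℓ)]
  constructor
  · intro h; nlinarith [pow2pos ℓ]
  · intro h; nlinarith [pow2pos ℓ]

/-- midpoint selection in one axis. -/
lemma mid1D (ℓ m : ℕ) {i aq : ℤ} (h1 : aq ≤ 2*i+1) (h2 : 2*i ≤ aq + m) :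
    ∃ x : ℝ, ((aq:ℝ)/2^(ℓ+1) ≤ x ∧ x ≤ ((aq:ℝ)+m+1)/2^(ℓ+1)) ∧
      ∀ c' : ℤ, (c':ℝ)/2^ℓ ≤ x → x ≤ ((c':ℝ)+1)/2^ℓ → c' = i := by
  set l : ℤ := max (2*i) aq with hl
  have hl1 : 2*i ≤ l := le_max_left _ _
  have hl2 : l ≤ 2*i+1 := by omega
  have hl3 : aq ≤ l := le_max_right _ _
  have hl4 : l ≤ aq + m := by omega
  have hpos := pow2pos (ℓ+1)
  refine ⟨((l:ℝ) + 1/2)/2^(ℓ+1), ⟨?_, ?_⟩, ?_⟩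
  · rw [div_le_div_iff_of_pos_right hpos]
    have : (aq:ℝ) ≤ (l:ℝ) := by exact_mod_cast hl3
    linarith
  · rw [div_le_div_iff_of_pos_right hpos]
    have : (l:ℝ) ≤ (aq:ℝ) + (m:ℝ) := by exact_mod_cast hl4
    linarith
  · intro c' hc1 hc2
    have e1 : (c':ℝ)/2^ℓ = ((2*c' : ℤ):ℝ)/2^(ℓ+1) := by
      rw [pow_succ]
      push_cast
      field_simp
    rw [e1, div_le_div_iff_of_pos_right hpos] at hc1
    have e2 : ((c':ℝ)+1)/2^ℓ = ((2*c'+2 : ℤ):ℝ)/2^(ℓ+1) := by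
      rw [pow_succ]
      push_cast
      field_simp
    rw [e2, div_le_div_iff_of_pos_right hpos] at hc2
    push_cast at hc1 hc2
    have hi1 : 2*c' ≤ l := by
      by_contra hcon
      push_neg at hcon
      have : (l:ℝ) + 1 ≤ 2*c' := by exact_mod_cast hcon
      linarith
    have hi2 : l ≤ 2*c' + 1 := by
      by_contra hcon
      push_neg at hcon
      have h' : 2*c' + 2 ≤ l := by omega
      have : (2*c':ℝ) + 2 ≤ l := by exact_mod_cast h'
      linarith
    omega

end GeoMain

section GeoAssemble

variable {S RS : ℕ → Finset (ℤ × ℤ)}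

/-- the support-extension lemma: an active level-`ℓ+1` B-spline avoiding `int Rℓ`
admits a level-`ℓ` parent with the same properties. -/
lemma GEO {m n : ℕ} (hm : 1 ≤ m) (hn : 1 ≤ n)
    (hRS : ∀ ℓ (p : ℤ × ℤ), p ∈ RS ℓ ↔ (cellL ℓ p ⊆ cellUL 0 (S 0) ∧
      interior (cellL ℓ p) ∩ cellUL (ℓ + 1) (S (ℓ + 1)) = ∅))
    (hnest : ∀ ℓ, cellUL (ℓ + 1) (S (ℓ + 1)) ⊆ cellUL ℓ (S ℓ))
    (hbdry : frontier (cellUL 0 (S 0)) ∩ frontier (cellUL 1 (S 1)) = ∅)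
    {ℓ : ℕ} {T : Finset (ℤ × ℤ)} (hT : cellUL ℓ T = cellUL (ℓ+1) (S (ℓ+1)))
    (hAt : Atilde m n T) {q : ℤ × ℤ}
    (hc1 : suppL m n (ℓ+1) q ∩ interior (cellUL ℓ (RS ℓ)) = ∅)
    (hc2 : (suppL m n (ℓ+1) q ∩ interior (cellUL 0 (S 0))).Nonempty) :
    ∃ q' : ℤ × ℤ, 0 ≤ q.1 - 2*q'.1 ∧ q.1 - 2*q'.1 ≤ (m:ℤ)+1 ∧
      0 ≤ q.2 - 2*q'.2 ∧ q.2 - 2*q'.2 ≤ (n:ℤ)+1 ∧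
      suppL m n ℓ q' ∩ interior (cellUL ℓ (RS ℓ)) = ∅ ∧
      (suppL m n ℓ q' ∩ interior (cellUL 0 (S 0))).Nonempty ∧
      suppL m n (ℓ+1) q ⊆ suppL m n ℓ q' := by
  classical
  have hSupT : suppL m n (ℓ+1) q ⊆ cellUL ℓ T := supp_sub_T hRS hnest hbdry hT hc1 hc2
  obtain ⟨a₁, b₁, a₂, b₂, hTsub, hA2⟩ := hAt
  set C : Finset (ℤ × ℤ) := ((Finset.Icc a₁ b₁) ×ˢ (Finset.Icc a₂ b₂)) \ T with hC
  -- half-range cells are in T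
  have hTmem : ∀ i j : ℤ, q.1 ≤ 2*i+1 → 2*i ≤ q.1 + m → q.2 ≤ 2*j+1 → 2*j ≤ q.2 + n →
      (i, j) ∈ T := by
    intro i j h1 h2 h3 h4
    obtain ⟨x, ⟨hx1, hx2⟩, hxu⟩ := mid1D ℓ m h1 h2
    obtain ⟨y, ⟨hy1, hy2⟩, hyu⟩ := mid1D ℓ n h3 h4
    have hzsupp : (x, y) ∈ suppL m n (ℓ+1) q := mem_suppL.mpr ⟨⟨hx1, hx2⟩, ⟨hy1, hy2⟩⟩
    have hzT := hSupT hzsupp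
    rcases mem_cellUL.mp hzT with ⟨c, hcT, hzc⟩
    rw [mem_cellL] at hzc
    have e1 : c.1 = i := hxu c.1 hzc.1.1 hzc.1.2
    have e2 : c.2 = j := hyu c.2 hzc.2.1 hzc.2.2
    have : c = (i, j) := Prod.ext e1 e2
    rwa [this] at hcT
  have hfreeC : ∀ i j : ℤ, q.1 ≤ 2*i+1 → 2*i ≤ q.1 + m → q.2 ≤ 2*j+1 → 2*j ≤ q.2 + n →
      (i, j) ∉ C := by
    intro i j h1 h2 h3 h4 hmem
    rw [hC, Finset.mem_sdiff] at hmem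
    exact hmem.2 (hTmem i j h1 h2 h3 h4)
  obtain ⟨a', b', he1, he2, he3, he4, hblock⟩ := EXT hm hn hA2 q.1 q.2 hfreeC
  -- inner witness cell
  obtain ⟨iw, hiw⟩ : ∃ iw : ℤ, 2*iw ≤ q.1 ∧ q.1 ≤ 2*iw + 1 := by
    rcases Int.even_or_odd q.1 with ⟨c, hc⟩ | ⟨c, hc⟩
    · exact ⟨c, by omega⟩
    · exact ⟨c, by omega⟩
  obtain ⟨jw, hjw⟩ : ∃ jw : ℤ, 2*jw ≤ q.2 ∧ q.2 ≤ 2*jw + 1 := by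
    rcases Int.even_or_odd q.2 with ⟨c, hc⟩ | ⟨c, hc⟩
    · exact ⟨c, by omega⟩
    · exact ⟨c, by omega⟩
  have hiwT : (iw, jw) ∈ T := hTmem iw jw (by omega) (by omega) (by omega) (by omega)
  have hiwrect := hTsub hiwT
  rw [Finset.mem_product, Finset.mem_Icc, Finset.mem_Icc] at hiwrect
  have hiwb : a₁ + 1 ≤ iw ∧ iw ≤ b₁ - 1 := hiwrect.1
  have hjwb : a₂ + 1 ≤ jw ∧ jw ≤ b₂ - 1 := hiwrect.2
  have hiwblock : a' ≤ iw ∧ iw ≤ a' + m := by omega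
  have hjwblock : b' ≤ jw ∧ jw ≤ b' + n := by omega
  -- all block cells are in T
  have hblockT : ∀ i j : ℤ, a' ≤ i → i ≤ a' + m → b' ≤ j → j ≤ b' + n → (i, j) ∈ T := by
    intro i j h1 h2 h3 h4
    have hrect1 : a₁ ≤ i ∧ i ≤ b₁ := by
      constructor
      · by_contra hcon
        push_neg at hcon
        have hcell : (a₁, jw) ∉ C := hblock a₁ jw (by omega) (by omega) hjwblock.1 hjwblock.2
        rw [hC, Finset.mem_sdiff] at hcell
        push_neg at hcell
        have hin : (a₁, jw) ∈ (Finset.Icc a₁ b₁) ×ˢ (Finset.Icc a₂ b₂) := by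
          rw [Finset.mem_product, Finset.mem_Icc, Finset.mem_Icc]
          exact ⟨⟨le_refl _, by omega⟩, ⟨by omega, by omega⟩⟩
        have := hTsub (hcell hin)
        rw [Finset.mem_product, Finset.mem_Icc] at this
        omega
      · by_contra hcon
        push_neg at hcon
        have hcell : (b₁, jw) ∉ C := hblock b₁ jw (by omega) (by omega) hjwblock.1 hjwblock.2
        rw [hC, Finset.mem_sdiff] at hcell
        push_neg at hcell
        have hin : (b₁, jw) ∈ (Finset.Icc a₁ b₁) ×ˢ (Finset.Icc a₂ b₂) := by
          rw [Finset.mem_product, Finset.mem_Icc, Finset.mem_Icc]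
          exact ⟨⟨by omega, le_refl _⟩, ⟨by omega, by omega⟩⟩
        have := hTsub (hcell hin)
        rw [Finset.mem_product, Finset.mem_Icc] at this
        omega
    have hrect2 : a₂ ≤ j ∧ j ≤ b₂ := by
      constructor
      · by_contra hcon
        push_neg at hcon
        have hcell : (iw, a₂) ∉ C := hblock iw a₂ hiwblock.1 hiwblock.2 (by omega) (by omega)
        rw [hC, Finset.mem_sdiff] at hcell
        push_neg at hcell
        have hin : (iw, a₂) ∈ (Finset.Icc a₁ b₁) ×ˢ (Finset.Icc a₂ b₂) := by
          rw [Finset.mem_product, Finset.mem_Icc, Finset.mem_Icc]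
          exact ⟨⟨by omega, by omega⟩, ⟨le_refl _, by omega⟩⟩
        have := hTsub (hcell hin)
        rw [Finset.mem_product, Finset.mem_Icc, Finset.mem_Icc] at this
        omega
      · by_contra hcon
        push_neg at hcon
        have hcell : (iw, b₂) ∉ C := hblock iw b₂ hiwblock.1 hiwblock.2 (by omega) (by omega)
        rw [hC, Finset.mem_sdiff] at hcell
        push_neg at hcell
        have hin : (iw, b₂) ∈ (Finset.Icc a₁ b₁) ×ˢ (Finset.Icc a₂ b₂) := by
          rw [Finset.mem_product, Finset.mem_Icc, Finset.mem_Icc]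
          exact ⟨⟨by omega, by omega⟩, ⟨by omega, le_refl _⟩⟩
        have := hTsub (hcell hin)
        rw [Finset.mem_product, Finset.mem_Icc, Finset.mem_Icc] at this
        omega
    have hnotC : (i, j) ∉ C := hblock i j h1 h2 h3 h4
    rw [hC, Finset.mem_sdiff] at hnotC
    push_neg at hnotC
    apply hnotC
    rw [Finset.mem_product, Finset.mem_Icc, Finset.mem_Icc]
    exact ⟨⟨hrect1.1, hrect1.2⟩, ⟨hrect2.1, hrect2.2⟩⟩
  -- the parent support is contained in the T-domain
  have hsupp'T : suppL m n ℓ (a', b') ⊆ cellUL ℓ T := by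
    intro z hz
    rw [mem_suppL] at hz
    obtain ⟨i, hi1, hi2, hi3, hi4⟩ := exists_subinterval (ℓ := ℓ) a' m (x := z.1)
      hz.1.1 hz.1.2
    obtain ⟨j, hj1, hj2, hj3, hj4⟩ := exists_subinterval (ℓ := ℓ) b' n (x := z.2)
      hz.2.1 hz.2.2
    exact cellL_subset_cellUL (hblockT i j hi1 hi2 hj1 hj2)
      (mem_cellL.mpr ⟨⟨hi3, hi4⟩, ⟨hj3, hj4⟩⟩)
  -- parent support contains the child support
  have hcontain : suppL m n (ℓ+1) q ⊆ suppL m n ℓ (a', b') := by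
    intro z hz
    rw [mem_suppL] at hz ⊢
    refine ⟨⟨?_, ?_⟩, ⟨?_, ?_⟩⟩
    · refine le_trans ((cross_le ℓ _ _).mpr ?_) hz.1.1
      push_cast
      have : (2*a' : ℝ) ≤ (q.1 : ℝ) := by exact_mod_cast he1
      linarith
    · refine le_trans hz.1.2 ((cross_le' ℓ _ _).mpr ?_)
      push_cast
      have : (q.1 : ℝ) ≤ (2*a' : ℝ) + m + 1 := by exact_mod_cast he2
      linarith
    · refine le_trans ((cross_le ℓ _ _).mpr ?_) hz.2.1
      push_cast
      have : (2*b' : ℝ) ≤ (q.2 : ℝ) := by exact_mod_cast he3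
      linarith
    · refine le_trans hz.2.2 ((cross_le' ℓ _ _).mpr ?_)
      push_cast
      have : (q.2 : ℝ) ≤ (2*b' : ℝ) + n + 1 := by exact_mod_cast he4
      linarith
  refine ⟨(a', b'), by omega, by omega, by omega, by omega, ?_, ?_, hcontain⟩
  · apply Set.eq_empty_of_subset_empty
    intro z hz
    have hzT : z ∈ cellUL ℓ T := hsupp'T hz.1
    have hdisj := int_R_disj_T hRS hT
    have : z ∈ interior (cellUL ℓ (RS ℓ)) ∩ cellUL ℓ T := ⟨hz.2, hzT⟩
    rwa [hdisj] at this
  · obtain ⟨z, hz1, hz2⟩ := hc2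
    exact ⟨z, hcontain hz1, hz2⟩

end GeoAssemble

section Weights

/-- a big box of indices. -/
def boxB (m n ℓ : ℕ) (M₀ : ℕ) : Finset (ℤ × ℤ) :=
  Finset.Icc (-((2:ℤ)^ℓ * (M₀+1) + (m+n+2)), -((2:ℤ)^ℓ * (M₀+1) + (m+n+2)))
    (((2:ℤ)^ℓ * (M₀+1) + (m+n+2)), ((2:ℤ)^ℓ * (M₀+1) + (m+n+2)))

/-- active indices at each level. -/
def ActS (m n : ℕ) (S RS : ℕ → Finset (ℤ × ℤ)) : ℕ → Set (ℤ × ℤ)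
  | 0 => {q | (suppL m n 0 q ∩ interior (cellUL 0 (S 0))).Nonempty}
  | (ℓ+1) => {q | suppL m n (ℓ+1) q ∩ interior (cellUL ℓ (RS ℓ)) = ∅ ∧
      (suppL m n (ℓ+1) q ∩ interior (cellUL 0 (S 0))).Nonempty}

/-- indices to be refined at each level. -/
def DishS (m n : ℕ) (S RS : ℕ → Finset (ℤ × ℤ)) (ℓ : ℕ) : Set (ℤ × ℤ) :=
  {q | suppL m n ℓ q ∩ interior (cellUL ℓ (RS ℓ)) = ∅ ∧
      (suppL m n ℓ q ∩ interior (cellUL 0 (S 0))).Nonempty}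

open Classical in
noncomputable def DishF (m n : ℕ) (S RS : ℕ → Finset (ℤ × ℤ)) (M₀ ℓ : ℕ) : Finset (ℤ × ℤ) :=
  (boxB m n ℓ M₀).filter (· ∈ DishS m n S RS ℓ)

open Classical in
noncomputable def ActF (m n : ℕ) (S RS : ℕ → Finset (ℤ × ℤ)) (M₀ ℓ : ℕ) : Finset (ℤ × ℤ) :=
  (boxB m n ℓ M₀).filter (· ∈ ActS m n S RS ℓ)

open Classical in
noncomputable def KsF (m n : ℕ) (S RS : ℕ → Finset (ℤ × ℤ)) (M₀ ℓ : ℕ) : Finset (ℤ × ℤ) :=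
  (boxB m n ℓ M₀).filter (· ∈ Kset m n RS ℓ)

/-- normalized binomial coefficient. -/
noncomputable def binomR (d : ℕ) (t : ℤ) : ℝ :=
  if 0 ≤ t ∧ t ≤ (d:ℤ)+1 then ((d+1).choose t.toNat : ℝ) / 2^d else 0

noncomputable def coefTS (m n : ℕ) (q r : ℤ × ℤ) : ℝ :=
  binomR m (r.1 - 2*q.1) * binomR n (r.2 - 2*q.2)

open Classical in
/-- the recursively defined weights. -/
noncomputable def Wgt (m n : ℕ) (S RS : ℕ → Finset (ℤ × ℤ)) (M₀ : ℕ) : ℕ → (ℤ × ℤ) → ℝ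
  | 0 => fun q => if q ∈ ActS m n S RS 0 then 1 else 0
  | (ℓ+1) => fun r => ∑ q ∈ DishF m n S RS M₀ ℓ, Wgt m n S RS M₀ ℓ q * coefTS m n q r

lemma binomR_nonneg (d : ℕ) (t : ℤ) : 0 ≤ binomR d t := by
  rw [binomR]
  split
  · positivity
  · exact le_refl 0

lemma binomR_pos {d : ℕ} {t : ℤ} (h1 : 0 ≤ t) (h2 : t ≤ (d:ℤ)+1) : 0 < binomR d t := by
  rw [binomR, if_pos ⟨h1, h2⟩]
  apply div_pos _ (by positivity)
  have : t.toNat ≤ d+1 := by omega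
  exact_mod_cast Nat.choose_pos this

lemma binomR_ne_zero {d : ℕ} {t : ℤ} (h : binomR d t ≠ 0) : 0 ≤ t ∧ t ≤ (d:ℤ)+1 := by
  by_contra hcon
  rw [binomR, if_neg hcon] at h
  exact h rfl

lemma coefTS_nonneg (m n : ℕ) (q r : ℤ × ℤ) : 0 ≤ coefTS m n q r :=
  mul_nonneg (binomR_nonneg _ _) (binomR_nonneg _ _)

lemma coefTS_pos {m n : ℕ} {q r : ℤ × ℤ} (h1 : 0 ≤ r.1 - 2*q.1) (h2 : r.1 - 2*q.1 ≤ (m:ℤ)+1)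
    (h3 : 0 ≤ r.2 - 2*q.2) (h4 : r.2 - 2*q.2 ≤ (n:ℤ)+1) : 0 < coefTS m n q r :=
  mul_pos (binomR_pos h1 h2) (binomR_pos h3 h4)

lemma coefTS_ne_zero {m n : ℕ} {q r : ℤ × ℤ} (h : coefTS m n q r ≠ 0) :
    (0 ≤ r.1 - 2*q.1 ∧ r.1 - 2*q.1 ≤ (m:ℤ)+1) ∧ (0 ≤ r.2 - 2*q.2 ∧ r.2 - 2*q.2 ≤ (n:ℤ)+1) := by
  rw [coefTS] at h
  exact ⟨binomR_ne_zero (fun hc => h (by rw [hc, zero_mul])),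
    binomR_ne_zero (fun hc => h (by rw [hc, mul_zero]))⟩

/-- support inclusion from the index range. -/
lemma supp_incl_of_range {m n ℓ : ℕ} {q r : ℤ × ℤ}
    (h1 : 0 ≤ r.1 - 2*q.1) (h2 : r.1 - 2*q.1 ≤ (m:ℤ)+1)
    (h3 : 0 ≤ r.2 - 2*q.2) (h4 : r.2 - 2*q.2 ≤ (n:ℤ)+1) :
    suppL m n (ℓ+1) r ⊆ suppL m n ℓ q := by
  intro z hz
  rw [mem_suppL] at hz ⊢
  refine ⟨⟨?_, ?_⟩, ⟨?_, ?_⟩⟩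
  · refine le_trans ((cross_le ℓ _ _).mpr ?_) hz.1.1
    have : (2*q.1 : ℝ) ≤ (r.1 : ℝ) := by exact_mod_cast (by omega : 2*q.1 ≤ r.1)
    linarith
  · refine le_trans hz.1.2 ((cross_le' ℓ _ _).mpr ?_)
    have : (r.1 : ℝ) ≤ 2*q.1 + m + 1 := by exact_mod_cast (by omega : r.1 ≤ 2*q.1 + m + 1)
    linarith
  · refine le_trans ((cross_le ℓ _ _).mpr ?_) hz.2.1
    have : (2*q.2 : ℝ) ≤ (r.2 : ℝ) := by exact_mod_cast (by omega : 2*q.2 ≤ r.2)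
    linarith
  · refine le_trans hz.2.2 ((cross_le' ℓ _ _).mpr ?_)
    have : (r.2 : ℝ) ≤ 2*q.2 + n + 1 := by exact_mod_cast (by omega : r.2 ≤ 2*q.2 + n + 1)
    linarith

/-- children of an index. -/
def childF (m n : ℕ) (q : ℤ × ℤ) : Finset (ℤ × ℤ) :=
  Finset.Icc (2*q.1) (2*q.1+m+1) ×ˢ Finset.Icc (2*q.2) (2*q.2+n+1)

lemma mem_childF {m n : ℕ} {q r : ℤ × ℤ} :
    r ∈ childF m n q ↔ (0 ≤ r.1 - 2*q.1 ∧ r.1 - 2*q.1 ≤ (m:ℤ)+1) ∧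
      (0 ≤ r.2 - 2*q.2 ∧ r.2 - 2*q.2 ≤ (n:ℤ)+1) := by
  rw [childF, Finset.mem_product, Finset.mem_Icc, Finset.mem_Icc]
  omega

lemma coefTS_eq_zero_of_not_child {m n : ℕ} {q r : ℤ × ℤ} (h : r ∉ childF m n q) :
    coefTS m n q r = 0 := by
  by_contra hc
  exact h (mem_childF.mpr (coefTS_ne_zero hc))

/-- the two-scale relation for the tensor-product B-splines. -/
lemma Bs_twoscale {m n : ℕ} (hm : 1 ≤ m) (hn : 1 ≤ n) (ℓ : ℕ) (q : ℤ × ℤ) (z : ℝ × ℝ) :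
    Bs m n ℓ q z = ∑ r ∈ childF m n q, coefTS m n q r * Bs m n (ℓ+1) r z := by
  have hpow : (2:ℝ)^(ℓ+1) = 2^ℓ * 2 := pow_succ 2 ℓ
  have h1 : cardinalB m (2^ℓ * z.1 - q.1)
      = ∑ i ∈ Finset.range (m+2), ((m+1).choose i : ℝ)/2^m *
          cardinalB m (2^(ℓ+1) * z.1 - (2*q.1+i)) := by
    rw [cardinalB_twoscale hm (2^ℓ * z.1 - q.1)]
    apply Finset.sum_congr rfl
    intro i _
    congr 1
    rw [hpow]
    push_cast
    ring
  have h2 : cardinalB n (2^ℓ * z.2 - q.2)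
      = ∑ j ∈ Finset.range (n+2), ((n+1).choose j : ℝ)/2^n *
          cardinalB n (2^(ℓ+1) * z.2 - (2*q.2+j)) := by
    rw [cardinalB_twoscale hn (2^ℓ * z.2 - q.2)]
    apply Finset.sum_congr rfl
    intro j _
    congr 1
    rw [hpow]
    push_cast
    ring
  rw [Bs, h1, h2, Finset.sum_mul_sum]
  rw [← Finset.sum_product']
  apply Finset.sum_nbij' (fun p => ((2*q.1+(p.1:ℤ), 2*q.2+(p.2:ℤ)) : ℤ × ℤ))
    (fun r => (((r.1 - 2*q.1).toNat, (r.2 - 2*q.2).toNat) : ℕ × ℕ))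
  · intro p hp
    rw [Finset.mem_product, Finset.mem_range, Finset.mem_range] at hp
    rw [mem_childF]
    constructor
    · constructor
      · omega
      · have : (p.1:ℤ) ≤ (m:ℤ)+1 := by exact_mod_cast (by omega : p.1 ≤ m+1)
        omega
    · constructor
      · omega
      · have : (p.2:ℤ) ≤ (n:ℤ)+1 := by exact_mod_cast (by omega : p.2 ≤ n+1)
        omega
  · intro r hr
    rw [mem_childF] at hr
    rw [Finset.mem_product, Finset.mem_range, Finset.mem_range]
    omega
  · intro p hp
    rw [Finset.mem_product, Finset.mem_range, Finset.mem_range] at hp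
    ext <;> simp <;> omega
  · intro r hr
    rw [mem_childF] at hr
    ext <;> simp <;> omega
  · intro p hp
    rw [Finset.mem_product, Finset.mem_range, Finset.mem_range] at hp
    rw [coefTS, Bs, binomR, binomR]
    rw [if_pos (by constructor <;> omega : (0:ℤ) ≤ 2*q.1+(p.1:ℤ) - 2*q.1 ∧ 2*q.1+(p.1:ℤ) - 2*q.1 ≤ (m:ℤ)+1)]
    rw [if_pos (by constructor <;> omega : (0:ℤ) ≤ 2*q.2+(p.2:ℤ) - 2*q.2 ∧ 2*q.2+(p.2:ℤ) - 2*q.2 ≤ (n:ℤ)+1)]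
    have e1 : (2*q.1+(p.1:ℤ) - 2*q.1).toNat = p.1 := by omega
    have e2 : (2*q.2+(p.2:ℤ) - 2*q.2).toNat = p.2 := by omega
    rw [e1, e2]
    have a1 : 2^(ℓ+1) * z.1 - ((2*q.1+(p.1:ℤ) : ℤ):ℝ) = 2^(ℓ+1) * z.1 - (2*q.1+(p.1:ℕ)) := by
      push_cast; ring
    have a2 : 2^(ℓ+1) * z.2 - ((2*q.2+(p.2:ℤ) : ℤ):ℝ) = 2^(ℓ+1) * z.2 - (2*q.2+(p.2:ℕ)) := by
      push_cast; ring
    rw [a1, a2]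
    ring

end Weights

end HBproof
open HBproof

set_option maxHeartbeats 2000000

/-- Weighted partition of unity for hierarchical B-splines: if `Ω⁰ ∈ A²_{m−1,n−1}`
w.r.t. `G⁰`, `Ωℓ ∈ Ã²_{m,n}` w.r.t. `G^{ℓ−1}` for `ℓ = 1,…,N−1`, and
`∂Ω⁰ ∩ ∂Ω¹ = ∅`, then there are strictly positive weights making the selected
hierarchical B-splines sum to one on `Ω⁰`. -/
theorem stmt19 (m n N : ℕ) (hm : 1 ≤ m) (hn : 1 ≤ n) (hN : 1 ≤ N)
    (S : ℕ → Finset (ℤ × ℤ))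
    (hempty : ∀ ℓ, N ≤ ℓ → S ℓ = ∅)
    (hnest : ∀ ℓ, cellUL (ℓ + 1) (S (ℓ + 1)) ⊆ cellUL ℓ (S ℓ))
    (RS : ℕ → Finset (ℤ × ℤ))
    (hRS : ∀ ℓ (p : ℤ × ℤ), p ∈ RS ℓ ↔ (cellL ℓ p ⊆ cellUL 0 (S 0) ∧
      interior (cellL ℓ p) ∩ cellUL (ℓ + 1) (S (ℓ + 1)) = ∅))
    (hΩ0 : A2 (m - 1) (n - 1) (S 0))
    (htilde : ∀ ℓ, 1 ≤ ℓ → ℓ < N → ∃ T : Finset (ℤ × ℤ),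
      cellUL (ℓ - 1) T = cellUL ℓ (S ℓ) ∧ Atilde m n T)
    (hbdry : frontier (cellUL 0 (S 0)) ∩ frontier (cellUL 1 (S 1)) = ∅) :
    ∃ w : ℕ × (ℤ × ℤ) → ℝ,
      (∀ x ∈ IndH m n N RS, 0 < w x) ∧
      ∀ z ∈ cellUL 0 (S 0), ∑ᶠ x ∈ IndH m n N RS, w x * Bs m n x.1 x.2 z = 1    := by
  classical
  obtain ⟨N', rfl⟩ : ∃ N'', N = N''+1 := ⟨N-1, by omega⟩
  set M₀ : ℕ := (S 0).sup (fun p => max p.1.natAbs p.2.natAbs) with hM₀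
  set W := Wgt m n S RS M₀ with hWdef
  have hW0 : ∀ q, W 0 q = if q ∈ ActS m n S RS 0 then 1 else 0 := fun q => rfl
  have hWs : ∀ ℓ r, W (ℓ+1) r = ∑ q ∈ DishF m n S RS M₀ ℓ, W ℓ q * coefTS m n q r :=
    fun ℓ r => rfl
  have hΩcl : cellUL 0 (S 0) ⊆ closure (interior (cellUL 0 (S 0))) :=
    cellUL_sub_closure_interior 0 (S 0)
  -- boundedness
  have hbound : ∀ z ∈ cellUL 0 (S 0),
      (-(M₀:ℝ) ≤ z.1 ∧ z.1 ≤ (M₀:ℝ)+1) ∧ (-(M₀:ℝ) ≤ z.2 ∧ z.2 ≤ (M₀:ℝ)+1) := by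
    intro z hz
    rcases mem_cellUL.mp hz with ⟨p, hp, hzp⟩
    have hble := Finset.le_sup (f := fun p : ℤ × ℤ => max p.1.natAbs p.2.natAbs) hp
    rw [← hM₀] at hble
    have hp1 : -(M₀:ℤ) ≤ p.1 ∧ p.1 ≤ (M₀:ℤ) ∧ -(M₀:ℤ) ≤ p.2 ∧ p.2 ≤ (M₀:ℤ) := by omega
    rw [mem_cellL] at hzp
    simp only [pow_zero, div_one] at hzp
    have c1 : (-(M₀:ℝ)) ≤ (p.1:ℝ) := by exact_mod_cast hp1.1
    have c2 : (p.1:ℝ) ≤ (M₀:ℝ) := by exact_mod_cast hp1.2.1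
    have c3 : (-(M₀:ℝ)) ≤ (p.2:ℝ) := by exact_mod_cast hp1.2.2.1
    have c4 : (p.2:ℝ) ≤ (M₀:ℝ) := by exact_mod_cast hp1.2.2.2
    constructor
    · constructor
      · linarith [hzp.1.1]
      · linarith [hzp.1.2]
    · constructor
      · linarith [hzp.2.1]
      · linarith [hzp.2.2]
  have hbox : ∀ ℓ (q : ℤ × ℤ), (suppL m n ℓ q ∩ interior (cellUL 0 (S 0))).Nonempty →
      q ∈ boxB m n ℓ M₀ := by
    intro ℓ q hne
    obtain ⟨z, hz1, hz2⟩ := hne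
    have hb := hbound z (interior_subset hz2)
    rw [mem_suppL] at hz1
    have hpos := pow2pos ℓ
    have h2l : (1:ℝ) ≤ 2^ℓ := one_le_pow₀ (by norm_num)
    have hu1 : (q.1:ℝ) ≤ 2^ℓ * z.1 := by
      have := hz1.1.1
      rw [div_le_iff₀ hpos] at this
      linarith
    have hl1 : 2^ℓ * z.1 ≤ (q.1:ℝ) + m + 1 := by
      have := hz1.1.2
      rw [le_div_iff₀ hpos] at this
      linarith
    have hu2 : (q.2:ℝ) ≤ 2^ℓ * z.2 := by
      have := hz1.2.1
      rw [div_le_iff₀ hpos] at this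
      linarith
    have hl2 : 2^ℓ * z.2 ≤ (q.2:ℝ) + n + 1 := by
      have := hz1.2.2
      rw [le_div_iff₀ hpos] at this
      linarith
    have k1 : q.1 ≤ 2^ℓ * ((M₀:ℤ)+1) + (m+n+2) := by
      have : (q.1:ℝ) ≤ ((2^ℓ * ((M₀:ℤ)+1) + (m+n+2) : ℤ) : ℝ) := by
        push_cast
        nlinarith [hb.1.2, hpos, h2l]
      exact_mod_cast this
    have k2 : -(2^ℓ * ((M₀:ℤ)+1) + (m+n+2)) ≤ q.1 := by
      have : ((-(2^ℓ * ((M₀:ℤ)+1) + (m+n+2)) : ℤ) : ℝ) ≤ (q.1:ℝ) := by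
        push_cast
        nlinarith [hb.1.1, hpos, h2l]
      exact_mod_cast this
    have k3 : q.2 ≤ 2^ℓ * ((M₀:ℤ)+1) + (m+n+2) := by
      have : (q.2:ℝ) ≤ ((2^ℓ * ((M₀:ℤ)+1) + (m+n+2) : ℤ) : ℝ) := by
        push_cast
        nlinarith [hb.2.2, hpos, h2l]
      exact_mod_cast this
    have k4 : -(2^ℓ * ((M₀:ℤ)+1) + (m+n+2)) ≤ q.2 := by
      have : ((-(2^ℓ * ((M₀:ℤ)+1) + (m+n+2)) : ℤ) : ℝ) ≤ (q.2:ℝ) := by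
        push_cast
        nlinarith [hb.2.1, hpos, h2l]
      exact_mod_cast this
    rw [boxB, Finset.mem_Icc]
    constructor
    · rw [Prod.le_def]
      push_cast
      exact ⟨k2, k4⟩
    · rw [Prod.le_def]
      push_cast
      exact ⟨k1, k3⟩
  -- basic set inclusions
  have hActNe : ∀ ℓ (q : ℤ × ℤ), q ∈ ActS m n S RS ℓ →
      (suppL m n ℓ q ∩ interior (cellUL 0 (S 0))).Nonempty := by
    intro ℓ q hq
    cases ℓ with
    | zero => exact hq
    | succ ℓ => exact hq.2
  have hKsub : ∀ ℓ (q : ℤ × ℤ), q ∈ Kset m n RS ℓ → q ∈ ActS m n S RS ℓ := by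
    intro ℓ q hq
    cases ℓ with
    | zero =>
      simp only [Kset, Set.mem_setOf_eq] at hq
      obtain ⟨z, hz1, hz2⟩ := hq
      exact ⟨z, hz1, interior_mono (RS_spec hRS 0) hz2⟩
    | succ ℓ =>
      simp only [Kset, Set.mem_setOf_eq] at hq
      obtain ⟨h1, z, hz1, hz2⟩ := hq
      exact ⟨h1, z, hz1, interior_mono (RS_spec hRS (ℓ+1)) hz2⟩
  have hDishAct : ∀ ℓ (q : ℤ × ℤ), q ∈ DishS m n S RS ℓ → q ∈ ActS m n S RS ℓ := by
    intro ℓ q hq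
    cases ℓ with
    | zero => exact hq.2
    | succ ℓ =>
      refine ⟨?_, hq.2⟩
      apply Set.eq_empty_of_subset_empty
      calc suppL m n (ℓ+1) q ∩ interior (cellUL ℓ (RS ℓ))
          ⊆ suppL m n (ℓ+1) q ∩ interior (cellUL (ℓ+1) (RS (ℓ+1))) :=
            Set.inter_subset_inter_right _ (interior_mono (R_mono hRS hnest ℓ))
        _ = ∅ := hq.1
  have hAKD : ∀ ℓ (q : ℤ × ℤ), q ∈ ActS m n S RS ℓ ↔
      (q ∈ Kset m n RS ℓ ∨ q ∈ DishS m n S RS ℓ) := by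
    intro ℓ q
    constructor
    · intro hq
      cases ℓ with
      | zero =>
        by_cases hK : (suppL m n 0 q ∩ interior (cellUL 0 (RS 0))).Nonempty
        · left; simp only [Kset, Set.mem_setOf_eq]; exact hK
        · right
          exact ⟨Set.not_nonempty_iff_eq_empty.mp hK, hq⟩
      | succ ℓ =>
        by_cases hK : (suppL m n (ℓ+1) q ∩ interior (cellUL (ℓ+1) (RS (ℓ+1)))).Nonempty
        · left; simp only [Kset, Set.mem_setOf_eq]; exact ⟨hq.1, hK⟩
        · right
          exact ⟨Set.not_nonempty_iff_eq_empty.mp hK, hq.2⟩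
    · intro hq
      rcases hq with hq | hq
      · exact hKsub ℓ q hq
      · exact hDishAct ℓ q hq
  have hKDdisj : ∀ ℓ, Disjoint (KsF m n S RS M₀ ℓ) (DishF m n S RS M₀ ℓ) := by
    intro ℓ
    rw [Finset.disjoint_left]
    intro q hq1 hq2
    rw [KsF, Finset.mem_filter] at hq1
    rw [DishF, Finset.mem_filter] at hq2
    have hK := hq1.2
    have hD := hq2.2
    cases ℓ with
    | zero =>
      simp only [Kset, Set.mem_setOf_eq] at hK
      rw [hD.1] at hK
      exact Set.not_nonempty_empty hK
    | succ ℓ =>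
      simp only [Kset, Set.mem_setOf_eq] at hK
      have := hK.2
      rw [hD.1] at this
      exact Set.not_nonempty_empty this
  have hsplitAct : ∀ ℓ (f : ℤ × ℤ → ℝ), ∑ q ∈ ActF m n S RS M₀ ℓ, f q
      = (∑ q ∈ KsF m n S RS M₀ ℓ, f q) + ∑ q ∈ DishF m n S RS M₀ ℓ, f q := by
    intro ℓ f
    rw [← Finset.sum_union (hKDdisj ℓ)]
    congr 1
    ext q
    rw [ActF, Finset.mem_union, KsF, DishF, Finset.mem_filter, Finset.mem_filter,
      Finset.mem_filter]
    constructor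
    · intro ⟨hb, hq⟩
      rcases (hAKD ℓ q).mp hq with h | h
      · exact Or.inl ⟨hb, h⟩
      · exact Or.inr ⟨hb, h⟩
    · intro h
      rcases h with ⟨hb, h⟩ | ⟨hb, h⟩
      · exact ⟨hb, (hAKD ℓ q).mpr (Or.inl h)⟩
      · exact ⟨hb, (hAKD ℓ q).mpr (Or.inr h)⟩
  have hWnn : ∀ ℓ (q : ℤ × ℤ), 0 ≤ W ℓ q := by
    intro ℓ
    induction ℓ with
    | zero =>
      intro q
      rw [hW0]
      split
      · norm_num
      · exact le_refl 0
    | succ ℓ ih =>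
      intro q
      rw [hWs]
      exact Finset.sum_nonneg (fun p _ => mul_nonneg (ih p) (coefTS_nonneg m n p q))
  -- the invariant
  have hINV : ∀ L, ∀ z ∈ cellUL 0 (S 0),
      (∑ ℓ ∈ Finset.range L, ∑ q ∈ KsF m n S RS M₀ ℓ, W ℓ q * Bs m n ℓ q z)
        + ∑ q ∈ ActF m n S RS M₀ L, W L q * Bs m n L q z = 1 := by
    intro L
    induction L with
    | zero =>
      intro z hz
      simp only [Finset.range_zero, Finset.sum_empty, zero_add]
      have hone : ∀ q ∈ ActF m n S RS M₀ 0, W 0 q * Bs m n 0 q z = Bs m n 0 q z := by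
        intro q hq
        rw [ActF, Finset.mem_filter] at hq
        rw [hW0, if_pos hq.2, one_mul]
      rw [Finset.sum_congr rfl hone]
      have hBs0 : ∀ p : ℤ × ℤ, Bs m n 0 p z = cardinalB m (z.1 - p.1) * cardinalB n (z.2 - p.2) := by
        intro p
        rw [Bs]
        norm_num
      have hK1a : ((⌊z.1⌋:ℤ):ℝ) ≤ z.1 := Int.floor_le z.1
      have hK1b : z.1 < ((⌊z.1⌋:ℤ):ℝ) + 1 := Int.lt_floor_add_one z.1
      have hK2a : ((⌊z.2⌋:ℤ):ℝ) ≤ z.2 := Int.floor_le z.2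
      have hK2b : z.2 < ((⌊z.2⌋:ℤ):ℝ) + 1 := Int.lt_floor_add_one z.2
      have hwin : ∑ q ∈ (Finset.Icc (⌊z.1⌋ - (m:ℤ)) ⌊z.1⌋ ×ˢ Finset.Icc (⌊z.2⌋ - (n:ℤ)) ⌊z.2⌋),
          Bs m n 0 q z = 1 := by
        calc ∑ q ∈ (Finset.Icc (⌊z.1⌋ - (m:ℤ)) ⌊z.1⌋ ×ˢ Finset.Icc (⌊z.2⌋ - (n:ℤ)) ⌊z.2⌋),
            Bs m n 0 q z
            = ∑ q ∈ (Finset.Icc (⌊z.1⌋ - (m:ℤ)) ⌊z.1⌋ ×ˢ Finset.Icc (⌊z.2⌋ - (n:ℤ)) ⌊z.2⌋),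
              cardinalB m (z.1 - q.1) * cardinalB n (z.2 - q.2) :=
              Finset.sum_congr rfl (fun q _ => hBs0 q)
          _ = ∑ x ∈ Finset.Icc (⌊z.1⌋ - (m:ℤ)) ⌊z.1⌋, ∑ y ∈ Finset.Icc (⌊z.2⌋ - (n:ℤ)) ⌊z.2⌋,
              cardinalB m (z.1 - x) * cardinalB n (z.2 - y) :=
              Finset.sum_product' (Finset.Icc (⌊z.1⌋ - (m:ℤ)) ⌊z.1⌋)
                (Finset.Icc (⌊z.2⌋ - (n:ℤ)) ⌊z.2⌋)
                (fun x y => cardinalB m (z.1 - x) * cardinalB n (z.2 - y))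
          _ = (∑ x ∈ Finset.Icc (⌊z.1⌋ - (m:ℤ)) ⌊z.1⌋, cardinalB m (z.1 - x)) *
              (∑ y ∈ Finset.Icc (⌊z.2⌋ - (n:ℤ)) ⌊z.2⌋, cardinalB n (z.2 - y)) :=
              (Finset.sum_mul_sum (Finset.Icc (⌊z.1⌋ - (m:ℤ)) ⌊z.1⌋)
                (Finset.Icc (⌊z.2⌋ - (n:ℤ)) ⌊z.2⌋)
                (fun x => cardinalB m (z.1 - x)) (fun y => cardinalB n (z.2 - y))).symm
          _ = 1 := by
              rw [cardinalB_window hm z.1 ⌊z.1⌋ hK1a hK1b,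
                cardinalB_window hn z.2 ⌊z.2⌋ hK2a hK2b]
              norm_num
      calc ∑ q ∈ ActF m n S RS M₀ 0, Bs m n 0 q z
          = ∑ q ∈ ActF m n S RS M₀ 0 ∪
              (Finset.Icc (⌊z.1⌋ - (m:ℤ)) ⌊z.1⌋ ×ˢ Finset.Icc (⌊z.2⌋ - (n:ℤ)) ⌊z.2⌋),
              Bs m n 0 q z := by
            apply Finset.sum_subset Finset.subset_union_left
            intro q _ hq
            by_contra hne
            apply hq
            have hact : q ∈ ActS m n S RS 0 := supp_meets_interior hm hn hΩcl hz hne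
            rw [ActF, Finset.mem_filter]
            exact ⟨hbox 0 q hact, hact⟩
        _ = ∑ q ∈ (Finset.Icc (⌊z.1⌋ - (m:ℤ)) ⌊z.1⌋ ×ˢ Finset.Icc (⌊z.2⌋ - (n:ℤ)) ⌊z.2⌋),
              Bs m n 0 q z := by
            symm
            apply Finset.sum_subset Finset.subset_union_right
            intro q _ hq
            rw [Finset.mem_product] at hq
            rw [hBs0]
            rcases not_and_or.mp hq with h | h
            · rw [cardinalB_outside_window hm hK1a hK1b h, zero_mul]
            · rw [cardinalB_outside_window hn hK2a hK2b h, mul_zero]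
        _ = 1 := hwin
    | succ L ih =>
      intro z hz
      have hIH := ih z hz
      have hsp := hsplitAct L (fun q => W L q * Bs m n L q z)
      have key : ∑ q ∈ DishF m n S RS M₀ L, W L q * Bs m n L q z
          = ∑ r ∈ ActF m n S RS M₀ (L+1), W (L+1) r * Bs m n (L+1) r z := by
        have step1 : ∑ q ∈ DishF m n S RS M₀ L, W L q * Bs m n L q z
            = ∑ q ∈ DishF m n S RS M₀ L,
                ∑ r ∈ (DishF m n S RS M₀ L).biUnion (childF m n),
                  W L q * (coefTS m n q r * Bs m n (L+1) r z) := by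
          apply Finset.sum_congr rfl
          intro q hq
          rw [Bs_twoscale hm hn L q z, Finset.mul_sum]
          apply Finset.sum_subset (Finset.subset_biUnion_of_mem (childF m n) hq)
          intro r _ hr
          rw [coefTS_eq_zero_of_not_child hr]
          ring
        have step2 : ∑ q ∈ DishF m n S RS M₀ L,
              ∑ r ∈ (DishF m n S RS M₀ L).biUnion (childF m n),
                W L q * (coefTS m n q r * Bs m n (L+1) r z)
            = ∑ r ∈ (DishF m n S RS M₀ L).biUnion (childF m n),
                W (L+1) r * Bs m n (L+1) r z := by
          rw [Finset.sum_comm]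
          apply Finset.sum_congr rfl
          intro r _
          rw [hWs, Finset.sum_mul]
          apply Finset.sum_congr rfl
          intro q _
          ring
        have step3 : ∑ r ∈ (DishF m n S RS M₀ L).biUnion (childF m n),
              W (L+1) r * Bs m n (L+1) r z
            = ∑ r ∈ (DishF m n S RS M₀ L).biUnion (childF m n) ∪ ActF m n S RS M₀ (L+1),
                W (L+1) r * Bs m n (L+1) r z := by
          apply Finset.sum_subset Finset.subset_union_left
          intro r _ hr
          have hWz : W (L+1) r = 0 := by
            rw [hWs]
            apply Finset.sum_eq_zero
            intro q hq
            by_cases hc : coefTS m n q r = 0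
            · rw [hc, mul_zero]
            · exfalso
              apply hr
              apply Finset.mem_biUnion.mpr ⟨q, hq, mem_childF.mpr (coefTS_ne_zero hc)⟩
          rw [hWz, zero_mul]
        have step4 : ∑ r ∈ (DishF m n S RS M₀ L).biUnion (childF m n) ∪ ActF m n S RS M₀ (L+1),
              W (L+1) r * Bs m n (L+1) r z
            = ∑ r ∈ ActF m n S RS M₀ (L+1), W (L+1) r * Bs m n (L+1) r z := by
          symm
          apply Finset.sum_subset Finset.subset_union_right
          intro r _ hr
          by_cases hBz : Bs m n (L+1) r z = 0
          · rw [hBz, mul_zero]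
          · have hne : (suppL m n (L+1) r ∩ interior (cellUL 0 (S 0))).Nonempty :=
              supp_meets_interior hm hn hΩcl hz hBz
            have hnact : r ∉ ActS m n S RS (L+1) := by
              intro hact
              exact hr (by rw [ActF, Finset.mem_filter]; exact ⟨hbox (L+1) r hne, hact⟩)
            have hcond : ¬ (suppL m n (L+1) r ∩ interior (cellUL L (RS L)) = ∅) := by
              intro hcond
              exact hnact ⟨hcond, hne⟩
            have hWz : W (L+1) r = 0 := by
              rw [hWs]
              apply Finset.sum_eq_zero
              intro q hq
              by_cases hc : coefTS m n q r = 0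
              · rw [hc, mul_zero]
              · exfalso
                apply hcond
                have hrange := coefTS_ne_zero hc
                have hsub := supp_incl_of_range (ℓ := L) hrange.1.1 hrange.1.2 hrange.2.1 hrange.2.2
                rw [DishF, Finset.mem_filter] at hq
                apply Set.eq_empty_of_subset_empty
                calc suppL m n (L+1) r ∩ interior (cellUL L (RS L))
                    ⊆ suppL m n L q ∩ interior (cellUL L (RS L)) :=
                      Set.inter_subset_inter_left _ hsub
                  _ = ∅ := hq.2.1
            rw [hWz, zero_mul]
        rw [step1, step2, step3, step4]
      rw [Finset.sum_range_succ]
      linarith [hIH, hsp, key]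
  -- the top level is empty
  have hActN : ActF m n S RS M₀ (N'+1) = ∅ := by
    rw [Finset.eq_empty_iff_forall_notMem]
    intro q hq
    rw [ActF, Finset.mem_filter] at hq
    obtain ⟨h1, h2⟩ := hq.2
    rw [← R_top hRS N' (hempty (N'+1) (le_refl _))] at h1
    rw [h1] at h2
    exact Set.not_nonempty_empty h2
  -- positivity
  have hPOS : ∀ ℓ, ℓ ≤ N' → ∀ q ∈ ActS m n S RS ℓ, 0 < W ℓ q := by
    intro ℓ
    induction ℓ with
    | zero =>
      intro _ q hq
      rw [hW0, if_pos hq]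
      norm_num
    | succ ℓ ihp =>
      intro hℓ q hq
      obtain ⟨T, hT, hAt⟩ := htilde (ℓ+1) (by omega) (by omega)
      have hT' : cellUL ℓ T = cellUL (ℓ+1) (S (ℓ+1)) := hT
      obtain ⟨h1, h2⟩ := hq
      obtain ⟨q', e1, e2, e3, e4, hd1, hd2, hcont⟩ :=
        GEO hm hn hRS hnest hbdry hT' hAt h1 h2
      have hq'Dish : q' ∈ DishF m n S RS M₀ ℓ := by
        rw [DishF, Finset.mem_filter]
        exact ⟨hbox ℓ q' hd2, ⟨hd1, hd2⟩⟩
      rw [hWs]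
      apply Finset.sum_pos'
      · intro p _
        exact mul_nonneg (hWnn ℓ p) (coefTS_nonneg m n p q)
      · refine ⟨q', hq'Dish, mul_pos ?_ (coefTS_pos e1 e2 e3 e4)⟩
        exact ihp (by omega) q' (hDishAct ℓ q' ⟨hd1, hd2⟩)
  -- assemble
  have hmemKsF : ∀ ℓ (q : ℤ × ℤ), q ∈ KsF m n S RS M₀ ℓ ↔ q ∈ Kset m n RS ℓ := by
    intro ℓ q
    rw [KsF, Finset.mem_filter]
    constructor
    · exact fun h => h.2
    · intro h
      exact ⟨hbox ℓ q (hActNe ℓ q (hKsub ℓ q h)), h⟩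
  refine ⟨fun x => if x.2 ∈ Kset m n RS x.1 ∧ x.1 < N'+1 then W x.1 x.2 else 1, ?_, ?_⟩
  · intro x hx
    have hx' : x.1 < N'+1 ∧ x.2 ∈ Kset m n RS x.1 := hx
    dsimp only
    rw [if_pos ⟨hx'.2, hx'.1⟩]
    exact hPOS x.1 (by omega) x.2 (hKsub x.1 x.2 hx'.2)
  · intro z hz
    have hIndH : IndH m n (N'+1) RS
        = ↑((Finset.range (N'+1)).biUnion
            (fun ℓ => (KsF m n S RS M₀ ℓ).image (fun q => (ℓ, q)))) := by
      ext x
      simp only [IndH, Set.mem_setOf_eq, Finset.coe_biUnion, Set.mem_iUnion,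
        Finset.mem_coe, Finset.mem_image, Finset.mem_range]
      constructor
      · intro ⟨h1, h2⟩
        exact ⟨x.1, h1, x.2, (hmemKsF x.1 x.2).mpr h2, rfl⟩
      · rintro ⟨ℓ, hℓ, q, hq, rfl⟩
        exact ⟨hℓ, (hmemKsF ℓ q).mp hq⟩
    rw [hIndH, finsum_mem_coe_finset]
    rw [Finset.sum_biUnion]
    · have him : ∀ ℓ ∈ Finset.range (N'+1),
          (∑ x ∈ (KsF m n S RS M₀ ℓ).image (fun q => (ℓ, q)),
            (if x.2 ∈ Kset m n RS x.1 ∧ x.1 < N'+1 then W x.1 x.2 else 1) * Bs m n x.1 x.2 z)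
          = ∑ q ∈ KsF m n S RS M₀ ℓ, W ℓ q * Bs m n ℓ q z := by
        intro ℓ hℓ
        rw [Finset.mem_range] at hℓ
        rw [Finset.sum_image (fun q _ q' _ h => by injection h)]
        apply Finset.sum_congr rfl
        intro q hq
        rw [if_pos ⟨(hmemKsF ℓ q).mp hq, hℓ⟩]
      rw [Finset.sum_congr rfl him]
      have := hINV (N'+1) z hz
      rw [hActN, Finset.sum_empty, add_zero] at this
      exact this
    · intro ℓ _ ℓ' _ hne
      apply Finset.disjoint_left.mpr
      intro x hx hx'
      rw [Finset.mem_image] at hx hx'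
      obtain ⟨q, _, rfl⟩ := hx
      obtain ⟨q', _, he⟩ := hx'
      injection he with he1 _
      exact hne he1.symm
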